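/- arXiv:2404.15905 — 5 statements merged into one kernel-verified Lean document; each statement's English description precedes it below -/
import Mathlib

section
/- A real sequence (x_n) converges statistically to x_0 if and only if there exists a set A ⊆ ℕ of natural density 0 such that the subsequence of (x_n) indexed by ℕ \ A converges to x_0 in the usual sense. -/
open Filter Topology

/-- Number of elements of `A` below `n`. -/
noncomputable def densCount (A : Set ℕ) (n : ℕ) : ℕ := Nat.card ↥(A ∩ Set.Iio n)

/-- `A ⊆ ℕ` has natural density `δ`. -/
def HasDensity (A : Set ℕ) (δ : ℝ) : Prop :=
  Tendsto (fun n => (densCount A n : ℝ) / n) atTop (𝓝 δ)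

/-- Upper natural density of `A ⊆ ℕ`. -/
noncomputable def upperDensity (A : Set ℕ) : ℝ :=
  Filter.limsup (fun n => (densCount A n : ℝ) / n) atTop

/-- A sequence in the circle `ℝ/ℤ` converges statistically to `0`. -/
def StatTendstoZero (x : ℕ → AddCircle (1:ℝ)) : Prop :=
  ∀ ε : ℝ, 0 < ε → HasDensity {n | ε ≤ ‖x n‖} 0

/-- The statistically characterized subset `t^s_{(a_n)}(𝕋)`. -/
def sChar (a : ℕ → ℤ) : Set (AddCircle (1:ℝ)) :=
  {x | StatTendstoZero (fun n => a n • x)}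

/-- The characterized subset `t_{(a_n)}(𝕋)`. -/
def charSet (a : ℕ → ℤ) : Set (AddCircle (1:ℝ)) :=
  {x | Tendsto (fun n => a n • x) atTop (𝓝 0)}

/-- `(a_n)` is an arithmetic sequence. -/
def IsArithSeq (a : ℕ → ℕ) : Prop :=
  a 0 = 1 ∧ StrictMono a ∧ ∀ n, a n ∣ a (n + 1)

/-- `d` is the increasing enumeration of `{r·a_k : 1 ≤ r < b_{k+1}}`. -/
def IsDSeq (a d : ℕ → ℕ) : Prop :=
  StrictMono d ∧
    Set.range d = {m : ℕ | ∃ k r : ℕ, 1 ≤ r ∧ r < a (k + 1) / a k ∧ m = r * a k}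

/-- Statistical convergence of a real sequence. -/
def StatTendsto (x : ℕ → ℝ) (x₀ : ℝ) : Prop :=
  ∀ ε : ℝ, 0 < ε → HasDensity {n | ε ≤ |x n - x₀|} 0

lemma densCount_eq_ncard (A : Set ℕ) (n : ℕ) : densCount A n = (A ∩ Set.Iio n).ncard := rfl

lemma densCount_mono {A B : Set ℕ} (h : A ⊆ B) (n : ℕ) : densCount A n ≤ densCount B n := by
  rw [densCount_eq_ncard, densCount_eq_ncard]
  exact Set.ncard_le_ncard (Set.inter_subset_inter_left _ h)
    ((Set.finite_Iio n).inter_of_right _)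

lemma densCount_union_le (A B : Set ℕ) (n : ℕ) :
    densCount (A ∪ B) n ≤ densCount A n + densCount B n := by
  rw [densCount_eq_ncard, densCount_eq_ncard, densCount_eq_ncard, Set.union_inter_distrib_right]
  exact Set.ncard_union_le _ _

lemma densCount_Iio_le (N n : ℕ) : densCount (Set.Iio N) n ≤ N := by
  rw [densCount_eq_ncard]
  calc (Set.Iio N ∩ Set.Iio n).ncard ≤ (Set.Iio N).ncard :=
        Set.ncard_le_ncard Set.inter_subset_left (Set.finite_Iio N)
    _ = N := by simp [← Nat.card_coe_set_eq, Nat.card_eq_card_finite_toFinset (Set.finite_Iio N)]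

/-- Master squeeze lemma. -/
lemma hasDensity_zero_of_le {A B : Set ℕ} (C : ℕ) (hB : HasDensity B 0)
    (h : ∀ n, densCount A n ≤ densCount B n + C) : HasDensity A 0 := by
  unfold HasDensity at *
  apply squeeze_zero (g := fun n => (densCount B n : ℝ) / n + (C : ℝ) / n)
  · intro n; positivity
  · intro n
    calc (densCount A n : ℝ) / n ≤ ((densCount B n : ℝ) + C) / n := by
          gcongr
          exact_mod_cast h n
      _ = (densCount B n : ℝ) / n + (C : ℝ) / n := add_div _ _ _
  · simpa using hB.add (tendsto_const_div_atTop_nhds_zero_nat (C : ℝ))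

lemma exists_block {N : ℕ → ℕ} (hN : StrictMono N) {j n : ℕ} (hjn : N j ≤ n) :
    ∃ k, j ≤ k ∧ N k ≤ n ∧ n < N (k + 1) := by
  set P : ℕ → Prop := fun k => N k ≤ n with hP
  have hjle : j ≤ n := le_trans (hN.le_apply) hjn
  have hspec : P (Nat.findGreatest P n) := Nat.findGreatest_spec (P := P) hjle hjn
  have hle : j ≤ Nat.findGreatest P n := Nat.le_findGreatest (P := P) hjle hjn
  refine ⟨Nat.findGreatest P n, hle, hspec, ?_⟩
  by_cases hc : Nat.findGreatest P n + 1 ≤ n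
  · have := Nat.findGreatest_is_greatest (P := P) (Nat.lt_succ_self _) hc
    exact lt_of_not_ge this
  · push_neg at hc
    exact lt_of_lt_of_le hc hN.le_apply

theorem stmt_2 (x : ℕ → ℝ) (x₀ : ℝ) :
    StatTendsto x x₀ ↔
      ∃ A : Set ℕ, HasDensity A 0 ∧ Tendsto x (atTop ⊓ 𝓟 Aᶜ) (𝓝 x₀) := by
  constructor
  · intro hx
    -- the nested sets
    set S : ℕ → Set ℕ := fun j => {n | 1 / ((j : ℝ) + 1) ≤ |x n - x₀|} with hS
    have hSmono : ∀ {l m : ℕ}, l ≤ m → S l ⊆ S m := by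
      intro l m hlm n hn
      have h1 : 1 / ((m : ℝ) + 1) ≤ 1 / ((l : ℝ) + 1) := by
        apply one_div_le_one_div_of_le <;> [positivity; exact_mod_cast Nat.succ_le_succ hlm]
      exact le_trans h1 hn
    have hSdens : ∀ j : ℕ, HasDensity (S j) 0 := fun j => hx _ (by positivity)
    -- choose thresholds
    have hMex : ∀ j : ℕ, ∃ M : ℕ, ∀ n ≥ M, (densCount (S j) n : ℝ) / n < 1 / ((j : ℝ) + 1) := by
      intro j
      have := (hSdens j).eventually (gt_mem_nhds (show (0:ℝ) < 1 / ((j : ℝ) + 1) by positivity))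
      exact eventually_atTop.1 this
    choose M hM using hMex
    -- recursive strictly monotone thresholds
    set N : ℕ → ℕ := fun j => Nat.rec (M 0) (fun j Nj => max (M (j + 1)) (Nj + 1)) j with hNdef
    have hNsucc : ∀ j, N (j + 1) = max (M (j + 1)) (N j + 1) := fun j => rfl
    have hNmono : StrictMono N := by
      apply strictMono_nat_of_lt_succ
      intro j
      rw [hNsucc]
      exact lt_of_lt_of_le (Nat.lt_succ_self _) (le_max_right _ _)
    have hNM : ∀ j, M j ≤ N j := by
      intro j
      cases j with
      | zero => exact le_refl _
      | succ j => rw [hNsucc]; exact le_max_left _ _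
    -- the exceptional set
    set A : Set ℕ := ⋃ j, S j ∩ Set.Ico (N j) (N (j + 1)) with hA
    have hmemA : ∀ {n : ℕ}, n ∈ A ↔ ∃ j, n ∈ S j ∧ N j ≤ n ∧ n < N (j + 1) := by
      intro n
      simp [hA, Set.mem_iUnion, Set.mem_Ico, and_assoc]
    -- key inequality
    have key : ∀ j n : ℕ, N j ≤ n → (densCount A n : ℝ) / n < 1 / ((j : ℝ) + 1) := by
      intro j n hjn
      obtain ⟨k, hjk, hkn, hnk⟩ := exists_block hNmono hjn
      have hsub : A ∩ Set.Iio n ⊆ S k ∩ Set.Iio n := by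
        rintro m ⟨hmA, hmn⟩
        obtain ⟨l, hml, hNl, hmNl⟩ := hmemA.1 hmA
        have hlk : l ≤ k := by
          have : N l < N (k + 1) := lt_of_le_of_lt hNl (lt_trans (Set.mem_Iio.1 hmn) hnk)
          exact Nat.lt_succ_iff.1 (hNmono.lt_iff_lt.1 this)
        exact ⟨hSmono hlk hml, hmn⟩
      have h1 : densCount A n ≤ densCount (S k) n := by
        rw [densCount_eq_ncard, densCount_eq_ncard]
        exact Set.ncard_le_ncard hsub ((Set.finite_Iio n).inter_of_right _)
      calc (densCount A n : ℝ) / n ≤ (densCount (S k) n : ℝ) / n := by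
            gcongr
        _ < 1 / ((k : ℝ) + 1) := hM k n (le_trans (hNM k) hkn)
        _ ≤ 1 / ((j : ℝ) + 1) := by
            apply one_div_le_one_div_of_le <;>
              [positivity; exact_mod_cast Nat.succ_le_succ hjk]
    refine ⟨A, ?_, ?_⟩
    · -- density zero
      unfold HasDensity
      rw [NormedAddCommGroup.tendsto_nhds_zero]
      intro ε hε
      obtain ⟨j, hj⟩ := exists_nat_one_div_lt hε
      rw [eventually_atTop]
      refine ⟨N j, fun n hn => ?_⟩
      have := key j n hn
      rw [Real.norm_eq_abs, abs_of_nonneg (by positivity)]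
      exact lt_trans this hj
    · -- convergence along the complement
      rw [Metric.tendsto_nhds]
      intro ε hε
      rw [eventually_inf_principal, eventually_atTop]
      obtain ⟨j, hj⟩ := exists_nat_one_div_lt hε
      refine ⟨N j, fun n hn hnA => ?_⟩
      obtain ⟨k, hjk, hkn, hnk⟩ := exists_block hNmono hn
      have hnS : n ∉ S k := fun hnS => hnA (hmemA.2 ⟨k, hnS, hkn, hnk⟩)
      have h1 : |x n - x₀| < 1 / ((k : ℝ) + 1) := lt_of_not_ge hnS
      have h2 : 1 / ((k : ℝ) + 1) ≤ 1 / ((j : ℝ) + 1) := by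
        apply one_div_le_one_div_of_le <;> [positivity; exact_mod_cast Nat.succ_le_succ hjk]
      rw [Real.dist_eq]
      exact lt_trans (lt_of_lt_of_le h1 h2) hj
  · rintro ⟨A, hA, hxA⟩
    intro ε hε
    have hev : ∀ᶠ n in atTop, n ∈ Aᶜ → |x n - x₀| < ε := by
      rw [← eventually_inf_principal]
      have := Metric.tendsto_nhds.1 hxA ε hε
      simpa [Real.dist_eq] using this
    obtain ⟨N₀, hN₀⟩ := eventually_atTop.1 hev
    apply hasDensity_zero_of_le N₀ hA
    intro n
    have hsub : {m | ε ≤ |x m - x₀|} ⊆ A ∪ Set.Iio N₀ := by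
      intro m hm
      by_contra hc
      rw [Set.mem_union] at hc
      push_neg at hc
      obtain ⟨hmA, hmN⟩ := hc
      rw [Set.mem_Iio, not_lt] at hmN
      exact absurd hm (not_le.2 (hN₀ m hmN hmA))
    calc densCount {m | ε ≤ |x m - x₀|} n ≤ densCount (A ∪ Set.Iio N₀) n :=
          densCount_mono hsub n
      _ ≤ densCount A n + densCount (Set.Iio N₀) n := densCount_union_le _ _ _
      _ ≤ densCount A n + N₀ := by
          exact Nat.add_le_add_left (densCount_Iio_le _ _) _
end

section
/- For any arithmetic sequence (a_n) and any x ∈ [0,1), there exists a unique sequence of integers (c_n) with 0 ≤ c_n ≤ b_n − 1 for all n, c_n < b_n − 1 for infinitely many n, and x = Σ_{n=1}^∞ c_n/a_n. -/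
open Filter Topology

namespace Stmt7Aux

variable {a : ℕ → ℕ} {x : ℝ}


variable {a : ℕ → ℕ} {x : ℝ}

lemma apos (ha : IsArithSeq a) (n : ℕ) : 0 < a n := by
  have h := ha.2.1.monotone (Nat.zero_le n)
  rw [ha.1] at h; omega

lemma amul (ha : IsArithSeq a) (n : ℕ) : (a (n+1) / a n) * a n = a (n+1) :=
  Nat.div_mul_cancel (ha.2.2 n)

lemma b2 (ha : IsArithSeq a) (n : ℕ) : 2 ≤ a (n+1) / a n := by
  obtain ⟨k, hk⟩ := ha.2.2 n
  have h1 : a n < a (n+1) := ha.2.1 (Nat.lt_succ_self n)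
  have hp := apos ha n
  rw [hk, Nat.mul_div_cancel_left _ hp]
  by_contra h
  push_neg at h
  interval_cases k <;> omega

lemma adv (ha : IsArithSeq a) {m n : ℕ} (h : m ≤ n) : a m ∣ a n := by
  induction n with
  | zero => simp_all
  | succ k ih =>
    rcases Nat.lt_or_ge m (k+1) with h' | h'
    · exact (ih (by omega)).trans (ha.2.2 k)
    · have : m = k + 1 := by omega
      subst this; exact dvd_rfl

lemma atop (ha : IsArithSeq a) : Tendsto (fun n => (a n : ℝ)) atTop atTop := by
  apply tendsto_atTop_mono (fun n => ?_) tendsto_natCast_atTop_atTop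
  exact_mod_cast ha.2.1.le_apply

lemma inv_tend (ha : IsArithSeq a) : Tendsto (fun n => 1/(a n : ℝ)) atTop (𝓝 0) := by
  exact (atop ha).inv_tendsto_atTop.congr (fun n => by simp [one_div])

variable {a : ℕ → ℕ} {x : ℝ}

noncomputable def gr (a : ℕ → ℕ) (x : ℝ) (n : ℕ) : ℕ :=
  (⌊Int.fract (x * a n) * (a (n+1) / a n : ℕ)⌋).toNat

lemma gr_nonneg (n : ℕ) : (0:ℤ) ≤ ⌊Int.fract (x * a n) * (a (n+1) / a n : ℕ)⌋ :=
  Int.floor_nonneg.2 (mul_nonneg (Int.fract_nonneg _) (by positivity))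

lemma gr_step (ha : IsArithSeq a) (n : ℕ) :
    (gr a x n : ℤ) = ⌊x * a (n+1)⌋ - (a (n+1) / a n : ℕ) * ⌊x * a n⌋ := by
  have hb := amul ha n
  set B := a (n+1) / a n with hB
  have hcast : ((a (n+1) : ℕ) : ℝ) = (B : ℝ) * (a n : ℝ) := by exact_mod_cast hb.symm
  have hfr := Int.fract_add_floor (x * a n)
  have key : x * (a (n+1) : ℝ) =
      Int.fract (x * a n) * (B : ℕ) + ((⌊x * a n⌋ * (B : ℕ) : ℤ) : ℝ) := by
    rw [hcast]
    push_cast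
    linear_combination (-(B : ℝ)) * hfr
  rw [gr, Int.toNat_of_nonneg (gr_nonneg n), key, Int.floor_add_intCast]
  ring

lemma gr_lt (ha : IsArithSeq a) (n : ℕ) : gr a x n < a (n+1) / a n := by
  set B := a (n+1) / a n with hB
  have hbpos : (0:ℝ) < (B : ℝ) := by
    have := b2 ha n; have : 0 < B := by omega
    exact_mod_cast this
  have h : ⌊Int.fract (x * a n) * (B : ℕ)⌋ < ((B : ℕ) : ℤ) := by
    rw [Int.floor_lt]
    have h1 : Int.fract (x * a n) * (B:ℝ) < 1 * (B:ℝ) :=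
      mul_lt_mul_of_pos_right (Int.fract_lt_one _) hbpos
    simp only [Int.cast_natCast]
    linarith
  have h2 : ((gr a x n : ℕ) : ℤ) = ⌊Int.fract (x * a n) * (B : ℕ)⌋ := by
    rw [gr]; exact Int.toNat_of_nonneg (gr_nonneg n)
  rw [← h2] at h
  exact_mod_cast h
variable {a : ℕ → ℕ} {x : ℝ}


lemma apos' (ha : IsArithSeq a) (n : ℕ) : (0:ℝ) < (a n : ℝ) := by
  exact_mod_cast apos ha n

lemma gr_sum (ha : IsArithSeq a) (hx0 : 0 ≤ x) (hx1 : x < 1) (N : ℕ) :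
    ∑ n ∈ Finset.range N, (gr a x n : ℝ) / a (n+1) = (⌊x * a N⌋ : ℝ) / a N := by
  induction N with
  | zero =>
    have h0 : ⌊x⌋ = 0 := Int.floor_eq_zero_iff.mpr ⟨hx0, hx1⟩
    simp [ha.1, h0]
  | succ N ih =>
    rw [Finset.sum_range_succ, ih]
    have hstep := gr_step (a := a) (x := x) ha N
    have hgr : (gr a x N : ℝ) = (⌊x * a (N+1)⌋ : ℝ) -
        ((a (N+1) / a N : ℕ) : ℝ) * (⌊x * a N⌋ : ℝ) := by
      have h := congrArg (fun z : ℤ => (z : ℝ)) hstep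
      simp only [Int.cast_sub, Int.cast_mul, Int.cast_natCast] at h
      exact h
    have hcast : ((a (N+1) : ℕ) : ℝ) = ((a (N+1) / a N : ℕ) : ℝ) * (a N : ℝ) := by
      exact_mod_cast (amul ha N).symm
    have h1 := apos' ha N
    have h2 := apos' ha (N+1)
    rw [hgr]
    field_simp
    rw [hcast]
    ring

lemma floor_tend (ha : IsArithSeq a) :
    Tendsto (fun N => (⌊x * a N⌋ : ℝ) / a N) atTop (𝓝 x) := by
  have hlow : ∀ N, x - 1/(a N : ℝ) ≤ (⌊x * a N⌋ : ℝ) / a N := by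
    intro N
    have h1 := apos' ha N
    have h2 : x * a N - 1 ≤ (⌊x * a N⌋ : ℝ) := (Int.sub_one_lt_floor _).le
    rw [le_div_iff₀ h1]
    have h3 : (x - 1/(a N : ℝ)) * a N = x * a N - 1 := by field_simp
    rw [h3]; exact h2
  have hhigh : ∀ N, (⌊x * a N⌋ : ℝ) / a N ≤ x := by
    intro N
    have h1 := apos' ha N
    rw [div_le_iff₀ h1]
    exact Int.floor_le _
  have hl : Tendsto (fun N => x - 1/(a N : ℝ)) atTop (𝓝 x) := by
    simpa using tendsto_const_nhds.sub (inv_tend ha)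
  exact tendsto_of_tendsto_of_tendsto_of_le_of_le hl tendsto_const_nhds hlow hhigh

lemma gr_summable (ha : IsArithSeq a) (hx0 : 0 ≤ x) (hx1 : x < 1) :
    Summable (fun n => (gr a x n : ℝ) / a (n+1)) := by
  apply summable_of_sum_range_le (c := 1) (fun n => by positivity)
  intro N
  rw [gr_sum ha hx0 hx1 N]
  have h1 := apos' ha N
  rw [div_le_one h1]
  calc (⌊x * a N⌋ : ℝ) ≤ x * a N := Int.floor_le _
    _ ≤ 1 * a N := by nlinarith
    _ = a N := one_mul _

lemma gr_tsum (ha : IsArithSeq a) (hx0 : 0 ≤ x) (hx1 : x < 1) :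
    x = ∑' n : ℕ, (gr a x n : ℝ) / a (n+1) := by
  have h1 := (gr_summable ha hx0 hx1).hasSum.tendsto_sum_nat
  have h2 : Tendsto (fun N => ∑ n ∈ Finset.range N, (gr a x n : ℝ) / a (n+1))
      atTop (𝓝 x) := by
    have := floor_tend (a := a) (x := x) ha
    apply this.congr
    intro N
    exact (gr_sum ha hx0 hx1 N).symm
  exact (tendsto_nhds_unique h1 h2).symm

lemma gr_inf (ha : IsArithSeq a) (hx0 : 0 ≤ x) (hx1 : x < 1) :
    {n | gr a x n + 1 < a (n+1) / a n}.Infinite := by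
  by_contra h
  rw [Set.not_infinite] at h
  obtain ⟨N, hN⟩ := h.bddAbove
  -- for n ≥ N+1, gr a x n + 1 = a (n+1)/a n
  have hmax : ∀ n, N + 1 ≤ n → gr a x n + 1 = a (n+1) / a n := by
    intro n hn
    have h1 := gr_lt (a := a) (x := x) ha n
    by_contra hne
    have : n ∈ {n | gr a x n + 1 < a (n+1) / a n} := by
      simp only [Set.mem_setOf_eq]; omega
    have := hN this
    omega
  set M := N + 1 with hM
  have hconst : ∀ k, ((⌊x * a (M + k)⌋ : ℝ) + 1) / a (M + k) =
      ((⌊x * a M⌋ : ℝ) + 1) / a M := by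
    intro k
    induction k with
    | zero => rfl
    | succ k ih =>
      rw [← ih]
      have n := M + k
      have hstep := gr_step (a := a) (x := x) ha (M + k)
      have hmx := hmax (M + k) (by omega)
      have key : (⌊x * a (M + k + 1)⌋ : ℤ) + 1 =
          ((a (M + k + 1) / a (M + k) : ℕ) : ℤ) * (⌊x * a (M + k)⌋ + 1) := by
        have : ((gr a x (M + k) : ℕ) : ℤ) + 1 = ((a (M + k + 1) / a (M + k) : ℕ) : ℤ) := by
          exact_mod_cast congrArg (Nat.cast : ℕ → ℤ) hmx
        linarith [hstep]
      have keyR : (⌊x * a (M + k + 1)⌋ : ℝ) + 1 =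
          ((a (M + k + 1) / a (M + k) : ℕ) : ℝ) * ((⌊x * a (M + k)⌋ : ℝ) + 1) := by
        have h := congrArg (fun z : ℤ => (z : ℝ)) key
        simp only [Int.cast_add, Int.cast_mul, Int.cast_one, Int.cast_natCast] at h
        exact h
      have hcast : ((a (M + k + 1) : ℕ) : ℝ) =
          ((a (M + k + 1) / a (M + k) : ℕ) : ℝ) * (a (M + k) : ℝ) := by
        exact_mod_cast (amul ha (M + k)).symm
      have h1 := apos' ha (M + k)
      have h2 := apos' ha (M + k + 1)
      have hbpos : (0:ℝ) < ((a (M + k + 1) / a (M + k) : ℕ) : ℝ) := by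
        have := b2 ha (M + k)
        have : (0:ℕ) < a (M + k + 1) / a (M + k) := by omega
        exact_mod_cast this
      show ((⌊x * a (M + (k+1))⌋ : ℝ) + 1) / a (M + (k+1)) =
        ((⌊x * a (M + k)⌋ : ℝ) + 1) / a (M + k)
      have hidx : M + (k + 1) = M + k + 1 := by omega
      rw [hidx, keyR, hcast]
      field_simp
  -- limit of LHS is x
  have hlim : Tendsto (fun k => ((⌊x * a (M + k)⌋ : ℝ) + 1) / a (M + k)) atTop (𝓝 x) := by
    have h1 : Tendsto (fun N => ((⌊x * a N⌋ : ℝ) + 1) / a N) atTop (𝓝 x) := by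
      have := (floor_tend (a := a) (x := x) ha).add (inv_tend ha)
      simp only [add_zero] at this
      apply this.congr
      intro N
      have := apos' ha N
      field_simp
    have h2 := h1.comp (tendsto_add_atTop_nat M)
    exact h2.congr (fun k => by simp [Function.comp, Nat.add_comm k M])
  have hx_eq : x = ((⌊x * a M⌋ : ℝ) + 1) / a M :=
    tendsto_nhds_unique hlim (by
      apply Tendsto.congr (fun k => (hconst k).symm)
      exact tendsto_const_nhds)
  have h1 := apos' ha M
  rw [eq_div_iff (ne_of_gt h1)] at hx_eq
  linarith [Int.lt_floor_add_one (x * a M)]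
variable {a : ℕ → ℕ} {x : ℝ}


/-- the telescoping bound sequence -/
noncomputable def g (a : ℕ → ℕ) (n : ℕ) : ℝ := 1/(a n : ℝ) - 1/(a (n+1) : ℝ)

lemma g_nonneg (ha : IsArithSeq a) (n : ℕ) : 0 ≤ g a n := by
  have h1 := apos' ha n
  have h2 := apos' ha (n+1)
  have h3 : (a n : ℝ) ≤ a (n+1) := by
    exact_mod_cast (ha.2.1 (Nat.lt_succ_self n)).le
  rw [g, sub_nonneg]
  exact one_div_le_one_div_of_le h1 h3

lemma g_eq (ha : IsArithSeq a) (n : ℕ) :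
    g a n = (((a (n+1) / a n : ℕ) : ℝ) - 1) / (a (n+1) : ℝ) := by
  have hcast : ((a (n+1) : ℕ) : ℝ) = ((a (n+1) / a n : ℕ) : ℝ) * (a n : ℝ) := by
    exact_mod_cast (amul ha n).symm
  have h1 := apos' ha n
  have h2 := apos' ha (n+1)
  rw [g]
  field_simp
  rw [hcast]
  ring

lemma g_tail_hasSum (ha : IsArithSeq a) (N : ℕ) :
    HasSum (fun i => g a (i + N)) (1/(a N : ℝ)) := by
  have hpart : ∀ M, ∑ i ∈ Finset.range M, g a (i + N) = 1/(a N : ℝ) - 1/(a (M + N) : ℝ) := by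
    intro M
    have h := Finset.sum_range_sub' (f := fun i => 1/(a (i + N) : ℝ)) M
    simp only [Nat.zero_add] at h
    rw [← h]
    apply Finset.sum_congr rfl
    intro i _
    rw [g, show i + N + 1 = i + 1 + N from by omega]
  have htendparts : Tendsto (fun M => ∑ i ∈ Finset.range M, g a (i + N)) atTop
      (𝓝 (1/(a N : ℝ))) := by
    rw [show (1/(a N : ℝ)) = 1/(a N : ℝ) - 0 by ring]
    apply Tendsto.congr (fun M => (hpart M).symm)
    exact tendsto_const_nhds.sub ((inv_tend ha).comp (tendsto_add_atTop_nat N))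
  have hsummable : Summable (fun i => g a (i + N)) := by
    apply summable_of_sum_range_le (c := 1/(a N : ℝ)) (fun i => g_nonneg ha _)
    intro M
    rw [hpart M]
    have := apos' ha (M + N)
    have h2 : 0 < 1/(a (M + N) : ℝ) := by positivity
    linarith
  exact (hsummable.hasSum_iff_tendsto_nat).mpr htendparts

lemma g_summable (ha : IsArithSeq a) : Summable (g a) := by
  have := (g_tail_hasSum ha 0).summable
  simpa using this

lemma c_le_g (ha : IsArithSeq a) {c : ℕ → ℕ} (h1 : ∀ n, c n < a (n+1) / a n) (n : ℕ) :
    (c n : ℝ) / a (n+1) ≤ g a n := by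
  rw [g_eq ha n]
  have h2 := apos' ha (n+1)
  have hc : (c n : ℝ) ≤ ((a (n+1) / a n : ℕ) : ℝ) - 1 := by
    have h4 : c n + 1 ≤ a (n+1) / a n := h1 n
    have h5 := (Nat.cast_le (α := ℝ)).mpr h4
    push_cast at h5
    linarith
  gcongr

lemma c_summable (ha : IsArithSeq a) {c : ℕ → ℕ} (h1 : ∀ n, c n < a (n+1) / a n) :
    Summable (fun n => (c n : ℝ) / a (n+1)) := by
  apply Summable.of_nonneg_of_le (fun n => by positivity) (c_le_g ha h1)
  exact g_summable ha

lemma sum_eq_floor (ha : IsArithSeq a) (hx0 : 0 ≤ x) (hx1 : x < 1) {c : ℕ → ℕ}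
    (h1 : ∀ n, c n < a (n+1) / a n)
    (h2 : {n | c n + 1 < a (n+1) / a n}.Infinite)
    (h3 : x = ∑' n : ℕ, (c n : ℝ) / a (n+1)) (N : ℕ) :
    ∑ n ∈ Finset.range N, (c n : ℝ) / a (n+1) = (⌊x * a N⌋ : ℝ) / a N := by
  set f : ℕ → ℝ := fun n => (c n : ℝ) / a (n+1) with hf
  have hfs := c_summable ha h1
  have hsplit : (∑ n ∈ Finset.range N, f n) + ∑' i, f (i + N) = x := by
    rw [h3]; exact Summable.sum_add_tsum_nat_add N hfs
  set T := ∑' i, f (i + N) with hT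
  have hT0 : 0 ≤ T := tsum_nonneg (fun i => by positivity)
  -- find a non-maximal digit past N
  obtain ⟨n₀, hn₀S, hn₀N⟩ := h2.exists_gt N
  set i₀ := n₀ - N with hi₀
  have hi₀N : i₀ + N = n₀ := by omega
  -- the improved comparison sequence
  set e : ℕ → ℝ := fun i => if i = i₀ then 1/(a (n₀+1) : ℝ) else 0 with he
  have heS : HasSum e (1/(a (n₀+1) : ℝ)) := hasSum_ite_eq i₀ _
  have hcomp : ∀ i, f (i + N) ≤ g a (i + N) - e i := by
    intro i
    by_cases hcase : i = i₀
    · subst hcase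
      rw [hi₀N]
      simp only [he, if_pos rfl]
      rw [g_eq ha n₀]
      have hp := apos' ha (n₀+1)
      have hc : (c n₀ : ℝ) ≤ ((a (n₀+1) / a n₀ : ℕ) : ℝ) - 2 := by
        have : c n₀ + 2 ≤ a (n₀+1) / a n₀ := hn₀S
        have := (Nat.cast_le (α := ℝ)).mpr this
        push_cast at this
        linarith
      rw [hf]
      simp only
      rw [div_sub_div_same]
      gcongr
      linarith
    · simp only [he, if_neg hcase, sub_zero]
      exact c_le_g ha h1 _
  have hgeS := g_tail_hasSum ha N
  have hTle : T ≤ 1/(a N : ℝ) - 1/(a (n₀+1) : ℝ) := by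
    have hs1 : Summable (fun i => f (i + N)) := (summable_nat_add_iff N).mpr hfs
    have hs2 : Summable (fun i => g a (i + N) - e i) := hgeS.summable.sub heS.summable
    have := Summable.tsum_le_tsum hcomp hs1 hs2
    rw [Summable.tsum_sub hgeS.summable heS.summable, hgeS.tsum_eq, heS.tsum_eq] at this
    exact this
  have hpinv : 0 < 1/(a (n₀+1) : ℝ) := by have := apos' ha (n₀+1); positivity
  have hTlt : T < 1/(a N : ℝ) := by linarith
  -- the partial sum times a N is a natural number m
  set m : ℕ := ∑ n ∈ Finset.range N, c n * (a N / a (n+1)) with hm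
  have hmcast : (m : ℝ) = (∑ n ∈ Finset.range N, f n) * (a N : ℝ) := by
    rw [hm, Nat.cast_sum, Finset.sum_mul]
    apply Finset.sum_congr rfl
    intro n hn
    have hnN : n + 1 ≤ N := by
      simp only [Finset.mem_range] at hn; omega
    have hdvd : a (n+1) ∣ a N := adv ha hnN
    have hne : ((a (n+1) : ℕ) : ℝ) ≠ 0 := ne_of_gt (apos' ha (n+1))
    rw [Nat.cast_mul, Nat.cast_div hdvd hne, hf]
    field_simp
  -- m ≤ x * a N < m + 1
  have haN := apos' ha N
  have hxm1 : (m : ℝ) ≤ x * a N := by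
    rw [hmcast]
    have : ∑ n ∈ Finset.range N, f n ≤ x := by linarith [hsplit, hT0]
    nlinarith
  have hxm2 : x * a N < (m : ℝ) + 1 := by
    rw [hmcast]
    have hS : x = (∑ n ∈ Finset.range N, f n) + T := hsplit.symm
    have h1N : 1/(a N : ℝ) * a N = 1 := by field_simp
    nlinarith [hTlt]
  have hfloor : ⌊x * a N⌋ = (m : ℤ) := by
    rw [Int.floor_eq_iff]
    constructor
    · exact_mod_cast hxm1
    · push_cast; exact hxm2
  rw [hfloor]
  push_cast
  rw [hmcast]
  field_simp
end Stmt7Aux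

theorem stmt_7 (a : ℕ → ℕ) (ha : IsArithSeq a) (x : ℝ) (hx0 : 0 ≤ x) (hx1 : x < 1) :
    ∃! c : ℕ → ℕ,
      (∀ n, c n < a (n + 1) / a n) ∧
      {n | c n + 1 < a (n + 1) / a n}.Infinite ∧
      x = ∑' n : ℕ, (c n : ℝ) / a (n + 1) := by
  refine ⟨Stmt7Aux.gr a x,
    ⟨fun n => Stmt7Aux.gr_lt ha n, Stmt7Aux.gr_inf ha hx0 hx1,
      Stmt7Aux.gr_tsum ha hx0 hx1⟩, ?_⟩
  rintro c ⟨h1, h2, h3⟩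
  funext n
  have A := Stmt7Aux.sum_eq_floor ha hx0 hx1 h1 h2 h3
  have B := Stmt7Aux.gr_sum (x := x) ha hx0 hx1
  have hp := Stmt7Aux.apos' ha (n+1)
  have e1 : (c n : ℝ) / a (n+1) = (Stmt7Aux.gr a x n : ℝ) / a (n+1) := by
    have A1 := A (n+1); have A0 := A n
    have B1 := B (n+1); have B0 := B n
    rw [Finset.sum_range_succ] at A1 B1
    linarith
  rw [div_eq_div_iff (ne_of_gt hp) (ne_of_gt hp)] at e1
  have e2 : (c n : ℝ) = (Stmt7Aux.gr a x n : ℝ) := mul_right_cancel₀ (ne_of_gt hp) e1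
  exact_mod_cast e2
end

section
/- There exists an arithmetic sequence (a_n) that is not b-bounded but such that t^s_{(a_n)}(T) = t^s_{(d_n)}(T), where (d_n) is the associated non-arithmetic sequence. -/
open Filter Topology

namespace Stmt10
noncomputable section

/-- extra multiplicity: at k = 16^t (t ≥ 2) it's t-1, else 0. -/
def extraAt (k : ℕ) : ℕ :=
  if 16 ^ (Nat.log 16 k) = k ∧ 2 ≤ Nat.log 16 k then Nat.log 16 k - 1 else 0

def bseq (k : ℕ) : ℕ := 2 + extraAt k

def aseq : ℕ → ℕ
  | 0 => 1
  | k + 1 => bseq k * aseq k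

def Eseq (n : ℕ) : ℕ := ∑ k ∈ Finset.range n, extraAt k

lemma two_le_bseq (k : ℕ) : 2 ≤ bseq k := Nat.le_add_right 2 _

lemma aseq_pos (k : ℕ) : 0 < aseq k := by
  induction k with
  | zero => norm_num [aseq]
  | succ k ih =>
    have := two_le_bseq k
    have : 0 < bseq k := by omega
    simpa [aseq] using Nat.mul_pos this ih

lemma aseq_lt_succ (k : ℕ) : aseq k < aseq (k + 1) := by
  have h1 := aseq_pos k
  have h2 := two_le_bseq k
  calc aseq k < 2 * aseq k := by omega
  _ ≤ bseq k * aseq k := Nat.mul_le_mul_right _ h2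
  _ = aseq (k+1) := rfl

lemma aseq_strictMono : StrictMono aseq := strictMono_nat_of_lt_succ aseq_lt_succ

lemma ratio (k : ℕ) : aseq (k + 1) / aseq k = bseq k := by
  show bseq k * aseq k / aseq k = bseq k
  exact Nat.mul_div_cancel _ (aseq_pos k)

lemma extraAt_pow {t : ℕ} (ht : 2 ≤ t) : extraAt (16 ^ t) = t - 1 := by
  rw [extraAt, Nat.log_pow (by norm_num)]
  simp [ht]

/-- the set D -/
def P (v : ℕ) : Prop := ∃ k r : ℕ, 1 ≤ r ∧ r < aseq (k + 1) / aseq k ∧ v = r * aseq k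

lemma P_of (k r : ℕ) (h1 : 1 ≤ r) (h2 : r < bseq k) : P (r * aseq k) :=
  ⟨k, r, h1, by rw [ratio]; exact h2, rfl⟩

lemma P_a (k : ℕ) : P (aseq k) := by
  simpa using P_of k 1 le_rfl (two_le_bseq k)

lemma P_elim {v : ℕ} (h : P v) : ∃ k r : ℕ, 1 ≤ r ∧ r < bseq k ∧ v = r * aseq k := by
  obtain ⟨k, r, h1, h2, h3⟩ := h
  exact ⟨k, r, h1, by rwa [ratio] at h2, h3⟩

lemma P_infinite : (setOf P).Infinite :=
  Set.infinite_of_injective_forall_mem aseq_strictMono.injective P_a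

lemma rep_unique {k r k' r' : ℕ} (h1 : 1 ≤ r) (h2 : r < bseq k) (h1' : 1 ≤ r')
    (h2' : r' < bseq k') (he : r * aseq k = r' * aseq k') : k = k' ∧ r = r' := by
  have key : ∀ {j r₁ : ℕ}, 1 ≤ r₁ → r₁ < bseq j →
      aseq j ≤ r₁ * aseq j ∧ r₁ * aseq j < aseq (j + 1) := by
    intro j r₁ ha hb
    constructor
    · exact Nat.le_mul_of_pos_left _ ha
    · show r₁ * aseq j < bseq j * aseq j
      exact (Nat.mul_lt_mul_right (aseq_pos j)).mpr hb
  obtain ⟨l1, u1⟩ := key h1 h2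
  obtain ⟨l2, u2⟩ := key h1' h2'
  have hk : k = k' := by
    by_contra hne
    rcases Nat.lt_or_ge k k' with hlt | hge
    · have : aseq (k + 1) ≤ aseq k' := aseq_strictMono.le_iff_le.mpr hlt
      omega
    · have hlt' : k' < k := by omega
      have : aseq (k' + 1) ≤ aseq k := aseq_strictMono.le_iff_le.mpr hlt'
      omega
  subst hk
  refine ⟨rfl, ?_⟩
  have := aseq_pos k
  exact Nat.eq_of_mul_eq_mul_right this he

lemma Eseq_mono : Monotone Eseq := fun m n h =>
  Finset.sum_le_sum_of_subset (Finset.range_subset_range.mpr h)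

lemma extraAt_le_log (k : ℕ) : extraAt k ≤ Nat.log 16 k := by
  rw [extraAt]; split <;> omega

lemma Eseq_sq_le (n : ℕ) : Eseq n * Eseq n ≤ n := by
  rcases Nat.eq_zero_or_pos n with rfl | hn
  · simp [Eseq]
  set L := Nat.log 16 n with hL
  -- E n ≤ sum over t in range (L+1) of t
  have hsub : (Finset.range n).filter (fun k => extraAt k ≠ 0) ⊆
      Finset.image (fun t => 16 ^ t) (Finset.range (L + 1)) := by
    intro k hk
    simp only [Finset.mem_filter, Finset.mem_range] at hk
    obtain ⟨hkn, hke⟩ := hk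
    rw [extraAt] at hke
    split at hke
    · rename_i hcond
      obtain ⟨hpow, hlog⟩ := hcond
      simp only [Finset.mem_image, Finset.mem_range]
      refine ⟨Nat.log 16 k, ?_, hpow⟩
      have : Nat.log 16 k ≤ L := Nat.log_mono_right (by omega)
      omega
    · omega
  have h1 : Eseq n = ∑ k ∈ (Finset.range n).filter (fun k => extraAt k ≠ 0), extraAt k := by
    rw [Eseq]
    exact (Finset.sum_filter_ne_zero _).symm
  have h2 : ∑ k ∈ (Finset.range n).filter (fun k => extraAt k ≠ 0), extraAt k ≤
      ∑ k ∈ Finset.image (fun t => 16 ^ t) (Finset.range (L + 1)), extraAt k :=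
    Finset.sum_le_sum_of_subset hsub
  have h3 : ∑ k ∈ Finset.image (fun t => 16 ^ t) (Finset.range (L + 1)), extraAt k =
      ∑ t ∈ Finset.range (L + 1), extraAt (16 ^ t) := by
    rw [Finset.sum_image]
    intro a _ b _ h
    exact Nat.pow_right_injective (by norm_num) h
  have h4 : ∑ t ∈ Finset.range (L + 1), extraAt (16 ^ t) ≤
      ∑ t ∈ Finset.range (L + 1), t := by
    apply Finset.sum_le_sum
    intro t _
    calc extraAt (16 ^ t) ≤ Nat.log 16 (16 ^ t) := extraAt_le_log _
    _ = t := Nat.log_pow (by norm_num) t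
  have h5 : ∑ t ∈ Finset.range (L + 1), t ≤ L * (L + 1) := by
    have h := Finset.sum_range_id_mul_two (L + 1)
    calc ∑ t ∈ Finset.range (L + 1), t ≤ (∑ t ∈ Finset.range (L + 1), t) * 2 :=
      Nat.le_mul_of_pos_right _ (by norm_num)
    _ = (L + 1) * L := h
    _ = L * (L + 1) := Nat.mul_comm _ _
  have hE : Eseq n ≤ L * (L + 1) := by
    rw [h1]; exact le_trans h2 (le_trans (le_of_eq h3) (le_trans h4 h5))
  rcases Nat.eq_zero_or_pos L with hL0 | hLpos
  · have h0 : Eseq n = 0 := by rw [hL0] at hE; simpa using hE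
    rw [h0]; omega
  -- L ≥ 1 : 16^L ≤ n and (L(L+1))^2 ≤ 16^L
  have hpow : 16 ^ L ≤ n := Nat.pow_log_le_self 16 (by omega)
  have key : (L * (L + 1)) * (L * (L + 1)) ≤ 16 ^ L := by
    have h2p : L + 1 ≤ 2 ^ L := (Nat.lt_two_pow_self (n := L))
    have : (L * (L + 1)) * (L * (L + 1)) ≤ (2 ^ L) ^ 4 := by
      have hL2 : L ≤ 2 ^ L := le_of_lt ((Nat.lt_two_pow_self (n := L)))
      calc (L * (L + 1)) * (L * (L + 1)) ≤ (2^L * 2^L) * (2^L * 2^L) :=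
        Nat.mul_le_mul (Nat.mul_le_mul hL2 h2p) (Nat.mul_le_mul hL2 h2p)
      _ = (2 ^ L) ^ 4 := by ring
    calc (L * (L + 1)) * (L * (L + 1)) ≤ (2 ^ L) ^ 4 := this
    _ = 16 ^ L := by rw [← Nat.pow_mul]; rw [show (16:ℕ) = 2^4 by norm_num, ← Nat.pow_mul]; ring_nf
  calc Eseq n * Eseq n ≤ (L * (L+1)) * (L * (L+1)) := Nat.mul_le_mul hE hE
  _ ≤ 16 ^ L := key
  _ ≤ n := hpow

lemma Eseq_le_sqrt (n : ℕ) : Eseq n ≤ Nat.sqrt n := Nat.le_sqrt.mpr (Eseq_sq_le n)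

open scoped Classical

def dseq : ℕ → ℕ := Nat.nth P
def iseq (k : ℕ) : ℕ := Nat.count P (aseq k)

lemma dseq_strictMono : StrictMono dseq := Nat.nth_strictMono P_infinite
lemma dseq_injective : Function.Injective dseq := Nat.nth_injective P_infinite
lemma dseq_mem (n : ℕ) : P (dseq n) := Nat.nth_mem_of_infinite P_infinite n
lemma dseq_iseq (k : ℕ) : dseq (iseq k) = aseq k := Nat.nth_count (P_a k)

lemma iseq_injective : Function.Injective iseq := by
  intro k1 k2 h
  have : aseq k1 = aseq k2 := by rw [← dseq_iseq k1, ← dseq_iseq k2, h]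
  exact aseq_strictMono.injective this

lemma le_iseq (k : ℕ) : k ≤ iseq k := by
  rw [iseq, Nat.count_eq_card_filter_range]
  have h : (Finset.range k).card ≤ ((Finset.range (aseq k)).filter P).card := by
    apply Finset.card_le_card_of_injOn (fun j => aseq j)
    · intro j hj
      simp only [Finset.mem_coe, Finset.mem_range] at hj
      simp only [Finset.mem_coe, Finset.mem_filter, Finset.mem_range]
      exact ⟨aseq_strictMono hj, P_a j⟩
    · exact fun x _ y _ h => aseq_strictMono.injective h
  simpa using h

def kOf (v : ℕ) : ℕ :=
  if h : ∃ k r : ℕ, 1 ≤ r ∧ r < bseq k ∧ v = r * aseq k then h.choose else 0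
def rOf (v : ℕ) : ℕ :=
  if h : ∃ k r : ℕ, 1 ≤ r ∧ r < bseq k ∧ v = r * aseq k then h.choose_spec.choose else 0

lemma kr_spec {v : ℕ} (h : P v) :
    1 ≤ rOf v ∧ rOf v < bseq (kOf v) ∧ v = rOf v * aseq (kOf v) := by
  have h' := P_elim h
  rw [kOf, rOf, dif_pos h', dif_pos h']
  exact h'.choose_spec.choose_spec

def aIdx (v : ℕ) : ℕ := if h : ∃ k, aseq k = v then h.choose else 0

lemma aIdx_spec {v : ℕ} (h : ∃ k, aseq k = v) : aseq (aIdx v) = v := by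
  rw [aIdx, dif_pos h]; exact h.choose_spec

/-- elements of `D` that are not `aseq`-values, with values `< aseq n`, number at most `Eseq n`. -/
lemma card_le_Eseq {n : ℕ} {s : Finset ℕ} (f : ℕ → ℕ)
    (hinj : Set.InjOn f ↑s)
    (h : ∀ j ∈ s, P (f j) ∧ f j < aseq n ∧ ¬∃ k, aseq k = f j) :
    s.card ≤ Eseq n := by
  have hE : Eseq n = ((Finset.range n).sigma (fun k => Finset.Ico 2 (bseq k))).card := by
    rw [Finset.card_sigma]
    apply Finset.sum_congr rfl
    intro k _
    rw [Nat.card_Ico]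
    show extraAt k = bseq k - 2
    rw [bseq]; omega
  rw [hE]
  apply Finset.card_le_card_of_injOn (fun j => (⟨kOf (f j), rOf (f j)⟩ : Σ _ : ℕ, ℕ))
  · intro j hj
    obtain ⟨hP, hlt, hnot⟩ := h j hj
    obtain ⟨h1, h2, h3⟩ := kr_spec hP
    have hr2 : 2 ≤ rOf (f j) := by
      by_contra hlt2
      have hone : rOf (f j) = 1 := by omega
      have : f j = aseq (kOf (f j)) := by
        conv_lhs => rw [h3]
        rw [hone, one_mul]
      exact hnot ⟨_, this.symm⟩
    have hk : kOf (f j) < n := by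
      have hle : aseq (kOf (f j)) ≤ f j := by
        conv_rhs => rw [h3]
        exact Nat.le_mul_of_pos_left _ h1
      exact aseq_strictMono.lt_iff_lt.mp (lt_of_le_of_lt hle hlt)
    simp only [Finset.mem_coe, Finset.mem_sigma, Finset.mem_range, Finset.mem_Ico]
    exact ⟨hk, hr2, h2⟩
  · intro j1 hj1 j2 hj2 heq
    simp only [Sigma.mk.inj_iff, heq_eq_eq] at heq
    obtain ⟨hk, hr⟩ := heq
    apply hinj hj1 hj2
    rw [(kr_spec (h j1 hj1).1).2.2, (kr_spec (h j2 hj2).1).2.2, hk, hr]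

lemma iseq_le (n : ℕ) : iseq n ≤ n + Eseq n := by
  classical
  rw [iseq, Nat.count_eq_card_filter_range]
  set s := (Finset.range (aseq n)).filter P with hs
  have hsplit := Finset.card_filter_add_card_filter_not
    (s := s) (fun v => ∃ k, aseq k = v)
  have c1 : (s.filter (fun v => ∃ k, aseq k = v)).card ≤ n := by
    rw [← Finset.card_range n]
    apply Finset.card_le_card_of_injOn aIdx
    · intro v hv
      simp only [hs, Finset.mem_coe, Finset.mem_filter, Finset.mem_range] at hv
      obtain ⟨⟨hvn, _⟩, hex⟩ := hv
      have := aIdx_spec hex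
      simp only [Finset.mem_coe, Finset.mem_range]
      exact aseq_strictMono.lt_iff_lt.mp (by rw [this]; exact hvn)
    · intro v1 hv1 v2 hv2 heq
      simp only [hs, Finset.coe_filter, Set.mem_setOf_eq] at hv1 hv2
      rw [← aIdx_spec hv1.2, ← aIdx_spec hv2.2, heq]
  have c2 : (s.filter (fun v => ¬∃ k, aseq k = v)).card ≤ Eseq n := by
    apply card_le_Eseq (fun v => v)
    · exact fun x _ y _ h => h
    · intro v hv
      simp only [hs, Finset.mem_filter, Finset.mem_range] at hv
      exact ⟨hv.1.2, hv.1.1, hv.2⟩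
  omega

variable (Q : ℕ → Prop)

lemma count1 (n : ℕ) :
    ((Finset.range n).filter (fun j => Q (dseq j))).card ≤
      ((Finset.range n).filter (fun k => Q (aseq k))).card + Eseq n := by
  set s := (Finset.range n).filter (fun j => Q (dseq j)) with hs
  have hsplit := Finset.card_filter_add_card_filter_not
    (s := s) (fun j => ∃ k, aseq k = dseq j)
  have c1 : (s.filter (fun j => ∃ k, aseq k = dseq j)).card ≤
      ((Finset.range n).filter (fun k => Q (aseq k))).card := by
    apply Finset.card_le_card_of_injOn (fun j => aIdx (dseq j))
    · intro j hj
      simp only [hs, Finset.mem_coe, Finset.filter_filter, Finset.mem_filter, Finset.mem_range] at hj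
      obtain ⟨hjn, hbad, hex⟩ := hj
      have hval := aIdx_spec hex
      have hij : iseq (aIdx (dseq j)) = j :=
        dseq_injective (by rw [dseq_iseq, hval])
      have hkn : aIdx (dseq j) < n := by
        have h' := le_iseq (aIdx (dseq j))
        rw [hij] at h'
        omega
      simp only [Finset.mem_coe, Finset.mem_filter, Finset.mem_range]
      exact ⟨hkn, by rw [hval]; exact hbad⟩
    · intro j1 hj1 j2 hj2 heq
      simp only [hs, Finset.coe_filter, Set.mem_setOf_eq] at hj1 hj2
      have heq' : aIdx (dseq j1) = aIdx (dseq j2) := heq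
      exact dseq_injective (by rw [← aIdx_spec hj1.2, ← aIdx_spec hj2.2, heq'])
  have c2 : (s.filter (fun j => ¬∃ k, aseq k = dseq j)).card ≤ Eseq n := by
    apply card_le_Eseq dseq
    · intro j1 _ j2 _ heq
      exact dseq_injective heq
    · intro j hj
      simp only [hs, Finset.filter_filter, Finset.mem_filter, Finset.mem_range] at hj
      refine ⟨dseq_mem j, ?_, hj.2.2⟩
      have : j < iseq n := lt_of_lt_of_le hj.1 (le_iseq n)
      rw [← dseq_iseq n]
      exact dseq_strictMono this
  omega

lemma count2 (n : ℕ) :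
    ((Finset.range n).filter (fun k => Q (aseq k))).card ≤
      ((Finset.range (n + Eseq n)).filter (fun j => Q (dseq j))).card := by
  apply Finset.card_le_card_of_injOn iseq
  · intro k hk
    simp only [Finset.mem_coe, Finset.mem_filter, Finset.mem_range] at hk ⊢
    obtain ⟨hkn, hbad⟩ := hk
    constructor
    · have h1 := iseq_le k
      have h2 : Eseq k ≤ Eseq n := Eseq_mono (le_of_lt hkn)
      omega
    · rw [dseq_iseq]; exact hbad
  · intro k1 _ k2 _ heq
    exact iseq_injective heq

lemma badD_mono (m n : ℕ) (h : m ≤ n) :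
    ((Finset.range m).filter (fun j => Q (dseq j))).card ≤
      ((Finset.range n).filter (fun j => Q (dseq j))).card :=
  Finset.card_le_card (Finset.filter_subset_filter _ (Finset.range_subset_range.mpr h))

lemma sqrt_div_tendsto : Tendsto (fun n : ℕ => (Nat.sqrt n : ℝ) / n) atTop (𝓝 0) := by
  have hs : Tendsto (fun n : ℕ => (Nat.sqrt n : ℝ)) atTop atTop := by
    apply tendsto_natCast_atTop_atTop.comp
    apply tendsto_atTop_atTop.mpr
    intro b
    refine ⟨b * b, fun n hn => ?_⟩
    calc b = Nat.sqrt (b * b) := (Nat.sqrt_eq b).symm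
    _ ≤ Nat.sqrt n := Nat.sqrt_le_sqrt hn
  have h0 : Tendsto (fun n : ℕ => ((Nat.sqrt n : ℝ))⁻¹) atTop (𝓝 0) :=
    hs.inv_tendsto_atTop
  refine squeeze_zero (fun n => by positivity) (fun n => ?_) h0
  rcases Nat.eq_zero_or_pos n with rfl | hn
  · simp
  · have h1 : 1 ≤ Nat.sqrt n := Nat.le_sqrt.mpr (by omega)
    have h1' : (1:ℝ) ≤ (Nat.sqrt n : ℝ) := by exact_mod_cast h1
    have hnr : (0:ℝ) < n := by exact_mod_cast hn
    rw [div_le_iff₀ hnr, inv_mul_eq_div, le_div_iff₀ (by linarith)]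
    have := Nat.sqrt_le n
    push_cast
    exact_mod_cast Nat.cast_le.mpr this


/-- density-count bridge -/
lemma densCount_eq_card (A : Set ℕ) (n : ℕ) :
    densCount A n = ((Finset.range n).filter (· ∈ A)).card := by
  have hset : A ∩ Set.Iio n = ↑((Finset.range n).filter (· ∈ A)) := by
    ext m
    simp only [Set.mem_inter_iff, Set.mem_Iio, Finset.coe_filter, Finset.mem_range,
      Set.mem_setOf_eq]
    tauto
  rw [densCount, Nat.card_coe_set_eq, hset, Set.ncard_coe_finset]

/-- transfer 1: counting f dominated by g plus sqrt gives density zero. -/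
lemma transfer1 (f g : ℕ → ℕ) (hfg : ∀ n, f n ≤ g n + Nat.sqrt n)
    (hg : Tendsto (fun n => (g n : ℝ) / n) atTop (𝓝 0)) :
    Tendsto (fun n => (f n : ℝ) / n) atTop (𝓝 0) := by
  have hlim : Tendsto (fun n : ℕ => (g n : ℝ) / n + (Nat.sqrt n : ℝ) / n) atTop (𝓝 0) := by
    simpa using hg.add sqrt_div_tendsto
  refine squeeze_zero (fun n => by positivity) (fun n => ?_) hlim
  rcases Nat.eq_zero_or_pos n with rfl | hn
  · simp
  · have hnr : (0:ℝ) < n := by exact_mod_cast hn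
    rw [← add_div, div_le_div_iff_of_pos_right hnr]
    exact_mod_cast hfg n

/-- transfer 2 -/
lemma transfer2 (f g : ℕ → ℕ) (hfg : ∀ n, f n ≤ g (2 * n))
    (hg : Tendsto (fun n => (g n : ℝ) / n) atTop (𝓝 0)) :
    Tendsto (fun n => (f n : ℝ) / n) atTop (𝓝 0) := by
  have h2 : Tendsto (fun n : ℕ => 2 * n) atTop atTop :=
    tendsto_atTop_mono (fun n => Nat.le_mul_of_pos_left n (by norm_num)) tendsto_id
  have hcomp : Tendsto (fun n : ℕ => (g (2 * n) : ℝ) / (2 * n)) atTop (𝓝 0) := by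
    have := hg.comp h2
    simp only [Function.comp_def, Nat.cast_mul, Nat.cast_ofNat] at this
    exact this
  have hlim : Tendsto (fun n : ℕ => 2 * ((g (2 * n) : ℝ) / (2 * n))) atTop (𝓝 0) := by
    simpa using hcomp.const_mul (2:ℝ)
  refine squeeze_zero (fun n => by positivity) (fun n => ?_) hlim
  rcases Nat.eq_zero_or_pos n with rfl | hn
  · simp
  · have hnr : (0:ℝ) < n := by exact_mod_cast hn
    have key : (f n : ℝ) / n = 2 * (f n : ℝ) / (2 * n) := by
      rw [mul_div_mul_left _ _ (two_ne_zero)]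
    rw [key, mul_div_assoc]
    have h2n : (0:ℝ) < 2 * n := by linarith
    apply mul_le_mul_of_nonneg_left _ (by norm_num : (0:ℝ) ≤ 2)
    rw [div_le_div_iff_of_pos_right h2n]
    exact_mod_cast hfg n

lemma b_unbounded : ¬ ∃ M : ℕ, ∀ n, aseq (n + 1) / aseq n ≤ M := by
  rintro ⟨M, hM⟩
  have h := hM (16 ^ (M + 2))
  rw [ratio] at h
  have hb : bseq (16 ^ (M + 2)) = M + 3 := by
    rw [bseq, extraAt_pow (by omega)]
    omega
  omega

lemma densCount_bad (f : ℕ → ℕ) (x : AddCircle (1:ℝ)) (ε : ℝ) (n : ℕ) :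
    densCount {m | ε ≤ ‖((f m : ℤ)) • x‖} n
      = ((Finset.range n).filter (fun k => ε ≤ ‖((f k : ℤ)) • x‖)).card := by
  rw [densCount_eq_card]
  congr 1

end
end Stmt10

theorem stmt_10 :
    ∃ a d : ℕ → ℕ, IsArithSeq a ∧ IsDSeq a d ∧
      (¬ ∃ M : ℕ, ∀ n, a (n + 1) / a n ≤ M) ∧
      sChar (fun n => (a n : ℤ)) = sChar (fun n => (d n : ℤ)) := by
  classical
  refine ⟨Stmt10.aseq, Stmt10.dseq,
    ⟨rfl, Stmt10.aseq_strictMono, fun n => ⟨Stmt10.bseq n, mul_comm _ _⟩⟩,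
    ⟨Stmt10.dseq_strictMono, Nat.range_nth_of_infinite Stmt10.P_infinite⟩,
    Stmt10.b_unbounded, ?_⟩
  ext x
  simp only [sChar, Set.mem_setOf_eq, StatTendstoZero]
  constructor
  · intro h ε hε
    have hA := h ε hε
    rw [HasDensity] at hA ⊢
    apply Stmt10.transfer1
      (g := fun n => densCount {m | ε ≤ ‖((Stmt10.aseq m : ℤ)) • x‖} n) _ _ hA
    intro n
    simp only [Stmt10.densCount_bad]
    have h1 := Stmt10.count1 (fun v => ε ≤ ‖((v : ℤ)) • x‖) n
    have h2 := Stmt10.Eseq_le_sqrt n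
    omega
  · intro h ε hε
    have hD := h ε hε
    rw [HasDensity] at hD ⊢
    apply Stmt10.transfer2
      (g := fun n => densCount {m | ε ≤ ‖((Stmt10.dseq m : ℤ)) • x‖} n) _ _ hD
    intro n
    simp only [Stmt10.densCount_bad]
    have h1 := Stmt10.count2 (fun v => ε ≤ ‖((v : ℤ)) • x‖) n
    have h2 := Stmt10.badD_mono (fun v => ε ≤ ‖((v : ℤ)) • x‖) (n + Stmt10.Eseq n) (2 * n)
      (by have := Stmt10.Eseq_le_sqrt n; have := Nat.sqrt_le_self n; omega)
    omega
end

section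
/- Let (a_n) be an arithmetic sequence and let x = Σ_{j} 1/a_{s_j+1} where supp(x) = {s_j + 1 : j ∈ ℕ} with b_{s_j+1} → ∞ (so supp(x) is b-divergent) and all digits c_n equal 1 on the support. If the union of intervals ⋃_j [n_{s_j}, n_{s_j} + b_{s_j+1} − 2] (in the indexing of (d_n) with a_k = d_{n_k}) has positive upper density, then x ∈ t_{(a_n)}(T) but x ∉ t^s_{(d_n)}(T). -/
open Filter Topology

lemma myNorm_le (y : ℝ) (m : ℤ) : ‖(y : AddCircle (1:ℝ))‖ ≤ |y - m| := by
  have h1 : ((y : ℝ) : AddCircle (1:ℝ)) = ((y - m : ℝ) : AddCircle (1:ℝ)) := by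
    have h0 : ((m : ℝ) : AddCircle (1:ℝ)) = 0 := by
      rw [AddCircle.coe_eq_zero_iff]
      exact ⟨m, by simp⟩
    have h2 : ((y - m : ℝ) : AddCircle (1:ℝ)) = (y : AddCircle (1:ℝ)) - ((m:ℝ) : AddCircle (1:ℝ)) := by
      rw [AddCircle.coe_sub]
    rw [h2, h0, sub_zero]
  rw [h1]
  set z : ℝ := y - m with hz_def
  rw [UnitAddCircle.norm_eq, abs_sub_round_eq_min]
  rcases le_or_gt 0 z with hz | hz
  · refine min_le_of_left_le ?_
    have h3 : Int.fract z ≤ z := by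
      rw [← Int.self_sub_floor]
      have : (0:ℝ) ≤ ⌊z⌋ := by exact_mod_cast Int.floor_nonneg.2 hz
      linarith
    exact h3.trans (le_abs_self z)
  · refine min_le_of_right_le ?_
    have hfl : ⌊z⌋ ≤ -1 := by
      have := Int.floor_nonpos hz.le
      rcases this.lt_or_eq with h | h
      · omega
      · exfalso
        have := Int.floor_le z
        rw [h] at this
        simp at this
        exact absurd this (not_le.2 hz)
    have hfl' : (⌊z⌋ : ℝ) ≤ -1 := by exact_mod_cast hfl
    have hfr : Int.fract z = z - ⌊z⌋ := rfl
    rw [abs_of_neg hz]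
    rw [hfr]; linarith

lemma myNorm_ge (y : ℝ) (hy : y ∈ Set.Icc (1/8 : ℝ) (7/8)) :
    (1/8 : ℝ) ≤ ‖(y : AddCircle (1:ℝ))‖ := by
  rw [UnitAddCircle.norm_eq, abs_sub_round_eq_min]
  have hfr : Int.fract y = y := Int.fract_eq_self.2 ⟨by linarith [hy.1], by linarith [hy.2]⟩
  rw [hfr]
  rcases hy with ⟨h1, h2⟩
  exact le_min h1 (by linarith)

lemma mySmul_coe (v : ℤ) (x : ℝ) :
    v • ((x : ℝ) : AddCircle (1:ℝ)) = (((v : ℝ) * x : ℝ) : AddCircle (1:ℝ)) := by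
  rw [← AddCircle.coe_zsmul, zsmul_eq_mul]

section Arith
variable {a : ℕ → ℕ} (ha : IsArithSeq a)
include ha

lemma arith_pos (n : ℕ) : 0 < a n :=
  lt_of_lt_of_le (by rw [ha.1]; norm_num : 0 < a 0) (ha.2.1.monotone (Nat.zero_le n))

lemma arith_dvd {i j : ℕ} (h : i ≤ j) : a i ∣ a j := by
  induction j with
  | zero => simpa [Nat.le_zero.mp h]
  | succ j ih =>
    rcases Nat.lt_or_ge i (j+1) with h' | h'
    · exact (ih (Nat.lt_succ_iff.mp h')).trans (ha.2.2 j)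
    · have : i = j + 1 := le_antisymm h h'
      simp [this]

lemma arith_bmul (k : ℕ) : a (k + 1) = (a (k + 1) / a k) * a k :=
  (Nat.div_mul_cancel (ha.2.2 k)).symm

lemma arith_b2 (k : ℕ) : 2 ≤ a (k + 1) / a k := by
  have h1 := arith_bmul ha k
  have h2 : a k < a (k + 1) := ha.2.1 (Nat.lt_succ_self k)
  by_contra h
  push_neg at h
  have h3 : (a (k + 1) / a k) * a k ≤ 1 * a k :=
    Nat.mul_le_mul_right _ (by omega)
  omega

lemma arith_growth (m t : ℕ) : 2 ^ t * a m ≤ a (m + t) := by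
  induction t with
  | zero => simp
  | succ t ih =>
    have h1 : 2 * a (m + t) ≤ a (m + t + 1) := by
      have hb := arith_b2 ha (m + t)
      have := arith_bmul ha (m + t)
      nlinarith [arith_pos ha (m + t)]
    calc 2 ^ (t+1) * a m = 2 * (2 ^ t * a m) := by ring
    _ ≤ 2 * a (m + t) := by omega
    _ ≤ a (m + t + 1) := h1

lemma arith_two_pow (m : ℕ) : 2 ^ m ≤ a m := by
  have := arith_growth ha 0 m
  simpa [ha.1] using this

end Arith

lemma smono_add {s : ℕ → ℕ} (hs : StrictMono s) (K j : ℕ) : s K + j ≤ s (K + j) := by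
  induction j with
  | zero => simp
  | succ j ih =>
    have h1 : s (K + j) < s (K + j + 1) := hs (Nat.lt_succ_self _)
    have h2 : K + (j + 1) = K + j + 1 := rfl
    rw [h2]
    omega

section Tail
variable {a s : ℕ → ℕ} (ha : IsArithSeq a) (hs : StrictMono s)
include ha hs

lemma tail_term_le (K j : ℕ) :
    (1 : ℝ) / a (s (j + K) + 1) ≤ (1/2 : ℝ) ^ j * (1 / a (s K + 1)) := by
  have h1 : 2 ^ j * a (s K + 1) ≤ a (s (j + K) + 1) := by
    have h2 : s K + j ≤ s (j + K) := by
      rw [Nat.add_comm j K]; exact smono_add hs K j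
    have h3 : 2 ^ j * a (s K + 1) ≤ a (s K + 1 + j) := arith_growth ha _ j
    have h4 : a (s K + 1 + j) ≤ a (s (j + K) + 1) := by
      apply ha.2.1.monotone; omega
    exact h3.trans h4
  have hpos : (0:ℝ) < a (s K + 1) := by exact_mod_cast arith_pos ha _
  have hpos2 : (0:ℝ) < a (s (j + K) + 1) := by exact_mod_cast arith_pos ha _
  have h1' : (2:ℝ) ^ j * a (s K + 1) ≤ a (s (j + K) + 1) := by exact_mod_cast h1
  calc (1:ℝ) / a (s (j + K) + 1) ≤ 1 / ((2:ℝ) ^ j * a (s K + 1)) :=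
        one_div_le_one_div_of_le (by positivity) h1'
  _ = (1/2:ℝ) ^ j * (1 / a (s K + 1)) := by
      rw [div_pow, one_pow, one_div_mul_one_div]

lemma summable_f : Summable (fun j => (1 : ℝ) / a (s j + 1)) := by
  apply Summable.of_nonneg_of_le (fun j => by positivity)
    (fun j => ?_) (summable_geometric_of_lt_one (by norm_num) (by norm_num : (1/2:ℝ) < 1))
  calc (1:ℝ) / a (s j + 1) ≤ (1/2:ℝ) ^ j * (1 / a (s 0 + 1)) := by
        simpa using tail_term_le ha hs 0 j
  _ ≤ (1/2:ℝ) ^ j * 1 := by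
      apply mul_le_mul_of_nonneg_left _ (by positivity)
      rw [div_le_one (by exact_mod_cast arith_pos ha _)]
      have h : 1 ≤ a (s 0 + 1) := arith_pos ha _
      exact_mod_cast h
  _ = (1/2:ℝ) ^ j := mul_one _

lemma tail_nonneg (K : ℕ) : 0 ≤ ∑' j, (1 : ℝ) / a (s (j + K) + 1) :=
  tsum_nonneg (fun j => by positivity)

lemma tail_le (K : ℕ) : (∑' j, (1 : ℝ) / a (s (j + K) + 1)) ≤ 2 / a (s K + 1) := by
  have hsum : Summable (fun j => (1 : ℝ) / a (s (j + K) + 1)) :=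
    ((summable_nat_add_iff K).mpr (summable_f ha hs))
  have h2 : (∑' j, (1 : ℝ) / a (s (j + K) + 1)) ≤ ∑' j, (1/2:ℝ) ^ j * (1 / a (s K + 1)) := by
    apply Summable.tsum_le_tsum (fun j => tail_term_le ha hs K j) hsum
    exact (summable_geometric_of_lt_one (by norm_num) (by norm_num)).mul_right _
  rw [tsum_mul_right, tsum_geometric_of_lt_one (by norm_num) (by norm_num)] at h2
  calc (∑' j, (1 : ℝ) / a (s (j + K) + 1)) ≤ (1 - 1/2 : ℝ)⁻¹ * (1 / a (s K + 1)) := h2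
  _ = 2 / a (s K + 1) := by rw [eq_comm, div_eq_mul_inv]; norm_num

lemma key_decomp (K v : ℕ) (hv : ∀ j < K, a (s j + 1) ∣ v) :
    ∃ M : ℤ, (v : ℝ) * (∑' j, (1 : ℝ) / a (s j + 1)) =
      M + v * (∑' j, (1 : ℝ) / a (s (j + K) + 1)) := by
  have hsum := summable_f ha hs
  have hsplit := Summable.sum_add_tsum_nat_add K hsum (f := fun j => (1 : ℝ) / a (s j + 1))
  refine ⟨(∑ j ∈ Finset.range K, (v / a (s j + 1) : ℕ) : ℤ), ?_⟩
  rw [← hsplit, mul_add]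
  congr 1
  rw [Int.cast_sum, Finset.mul_sum]
  apply Finset.sum_congr rfl
  intro j hj
  rw [Int.cast_natCast, Nat.cast_div (hv j (Finset.mem_range.mp hj))
    (by exact_mod_cast (arith_pos ha (s j + 1)).ne')]
  ring

end Tail

lemma count_lt {d : ℕ → ℕ} (hd : StrictMono d) (m : ℕ) :
    Nat.card ↥(Set.range d ∩ Set.Iio (d m)) = m := by
  have heq : Set.range d ∩ Set.Iio (d m) = d '' Set.Iio m := by
    ext v
    constructor
    · rintro ⟨⟨i, rfl⟩, hlt⟩
      exact ⟨i, hd.lt_iff_lt.1 hlt, rfl⟩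
    · rintro ⟨i, hi, rfl⟩
      exact ⟨⟨i, rfl⟩, hd hi⟩
  rw [heq, Nat.card_coe_set_eq, Set.ncard_image_of_injective _ hd.injective,
    ← Finset.coe_Iio, Set.ncard_coe_finset, Nat.card_Iio]

section Enum
variable {a d : ℕ → ℕ} (ha : IsArithSeq a) (hd : IsDSeq a d)
include ha hd

lemma enum_band (k r : ℕ) (hr : r ≤ a (k + 1) / a k) :
    Set.range d ∩ Set.Ico (a k) (r * a k) = (fun t => t * a k) '' Set.Ico 1 r := by
  ext v
  constructor
  · rintro ⟨hv, hlo, hhi⟩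
    rw [hd.2] at hv
    obtain ⟨k', r', hr1, hr2, rfl⟩ := hv
    have hkk : k' = k := by
      rcases lt_trichotomy k' k with h | h | h
      · exfalso
        have : r' * a k' < a (k' + 1) := by
          calc r' * a k' < (a (k' + 1) / a k') * a k' :=
                (Nat.mul_lt_mul_right (arith_pos ha k')).mpr hr2
          _ = a (k' + 1) := (arith_bmul ha k').symm
        have h2 : a (k' + 1) ≤ a k := ha.2.1.monotone h
        omega
      · exact h
      · exfalso
        have h2 : a k' ≤ r' * a k' := Nat.le_mul_of_pos_left _ hr1
        have h3 : a (k + 1) ≤ a k' := ha.2.1.monotone h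
        have h4 : r * a k ≤ (a (k + 1) / a k) * a k := Nat.mul_le_mul_right _ hr
        rw [← arith_bmul ha k] at h4
        omega
    subst hkk
    have hak := arith_pos ha k'
    refine ⟨r', ⟨?_, ?_⟩, rfl⟩
    · exact hr1
    · by_contra h
      push_neg at h
      have : r * a k' ≤ r' * a k' := Nat.mul_le_mul_right _ h
      omega
  · rintro ⟨t, ⟨ht1, ht2⟩, rfl⟩
    have hak := arith_pos ha k
    refine ⟨?_, ?_, ?_⟩
    · rw [hd.2]
      exact ⟨k, t, ht1, lt_of_lt_of_le ht2 hr, rfl⟩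
    · exact Nat.le_mul_of_pos_left _ ht1
    · exact (Nat.mul_lt_mul_right hak).mpr ht2

lemma enum_count (nk : ℕ → ℕ) (hnk : ∀ k, d (nk k) = a k) (k r : ℕ) (hr1 : 1 ≤ r)
    (hr2 : r ≤ a (k + 1) / a k) :
    Nat.card ↥(Set.range d ∩ Set.Iio (r * a k)) = nk k + (r - 1) := by
  have hak := arith_pos ha k
  have hsplit : Set.range d ∩ Set.Iio (r * a k) =
      (Set.range d ∩ Set.Iio (a k)) ∪ (Set.range d ∩ Set.Ico (a k) (r * a k)) := by
    ext v
    simp only [Set.mem_inter_iff, Set.mem_union, Set.mem_Iio, Set.mem_Ico]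
    constructor
    · rintro ⟨hv, hlt⟩
      rcases lt_or_ge v (a k) with h | h
      · exact Or.inl ⟨hv, h⟩
      · exact Or.inr ⟨hv, h, hlt⟩
    · rintro (⟨hv, h⟩ | ⟨hv, h1, h2⟩)
      · have : a k ≤ r * a k := Nat.le_mul_of_pos_left _ hr1
        exact ⟨hv, by omega⟩
      · exact ⟨hv, h2⟩
  have hc1 : (Set.range d ∩ Set.Iio (a k)).ncard = nk k := by
    rw [← Nat.card_coe_set_eq, ← hnk k, count_lt hd.1]
  have hc2 : (Set.range d ∩ Set.Ico (a k) (r * a k)).ncard = r - 1 := by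
    rw [enum_band ha hd k r hr2, Set.ncard_image_of_injective _
      (fun x y h => Nat.eq_of_mul_eq_mul_right hak h), ← Finset.coe_Ico,
      Set.ncard_coe_finset, Nat.card_Ico]
  have hdisj : Disjoint (Set.range d ∩ Set.Iio (a k))
      (Set.range d ∩ Set.Ico (a k) (r * a k)) :=
    Set.disjoint_left.mpr (fun v ⟨_, h1⟩ ⟨_, h2, _⟩ => absurd h2 (by simpa using h1))
  rw [hsplit, Nat.card_coe_set_eq,
    Set.ncard_union_eq hdisj ((Set.finite_Iio _).inter_of_right _)
      ((Set.finite_Ico _ _).inter_of_right _), hc1, hc2]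

lemma enum_val (nk : ℕ → ℕ) (hnk : ∀ k, d (nk k) = a k) (k r : ℕ) (hr1 : 1 ≤ r)
    (hr2 : r < a (k + 1) / a k) :
    d (nk k + (r - 1)) = r * a k := by
  have hmem : r * a k ∈ Set.range d := by
    rw [hd.2]; exact ⟨k, r, hr1, hr2, rfl⟩
  obtain ⟨m, hm⟩ := hmem
  have h1 : Nat.card ↥(Set.range d ∩ Set.Iio (d m)) = m := count_lt hd.1 m
  rw [hm, enum_count ha hd nk hnk k r hr1 (le_of_lt hr2)] at h1
  rw [h1]
  exact hm

lemma enum_succ (nk : ℕ → ℕ) (hnk : ∀ k, d (nk k) = a k) (k : ℕ) :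
    nk (k + 1) = nk k + (a (k + 1) / a k - 1) := by
  have hb := arith_b2 ha k
  have h1 : Nat.card ↥(Set.range d ∩ Set.Iio (d (nk (k + 1)))) = nk (k + 1) :=
    count_lt hd.1 _
  rw [hnk (k + 1), arith_bmul ha k,
    enum_count ha hd nk hnk k (a (k + 1) / a k) (by omega) le_rfl] at h1
  omega

lemma nk_mono (nk : ℕ → ℕ) (hnk : ∀ k, d (nk k) = a k) : StrictMono nk := by
  apply strictMono_nat_of_lt_succ
  intro k
  have := enum_succ ha hd nk hnk k
  have hb := arith_b2 ha k
  omega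

end Enum

section Blocks
variable (A L : ℕ → ℕ)

def Aligned (n : ℕ) : Prop := ∀ j, A j < n → A j + L j ≤ n

variable {A L}
variable (hL1 : ∀ j, 1 ≤ L j) (hsep : ∀ j, A j + L j ≤ A (j + 1))
include hL1 hsep

lemma blocks_le (i j : ℕ) (h : i < j) : A i + L i ≤ A j := by
  induction j with
  | zero => omega
  | succ j ih =>
    rcases Nat.lt_or_ge i j with h' | h'
    · have h2 := hsep j
      have h3 := hL1 j
      have := ih h'
      omega
    · have : i = j := by omega
      subst this
      exact hsep i

lemma blocks_mono : StrictMono A := by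
  apply strictMono_nat_of_lt_succ
  intro j
  have := hsep j
  have := hL1 j
  omega

lemma densCount_le (S : Set ℕ) (n : ℕ) : densCount S n ≤ n := by
  rw [densCount, Nat.card_coe_set_eq]
  calc (S ∩ Set.Iio n).ncard ≤ (Set.Iio n).ncard :=
        Set.ncard_le_ncard Set.inter_subset_right (Set.finite_Iio n)
  _ = n := by rw [← Finset.coe_Iio, Set.ncard_coe_finset, Nat.card_Iio]

lemma blocks_count (S : Set ℕ) (J1 : ℕ)
    (hgood : ∀ j, J1 ≤ j → ∃ G : Finset ℕ,
      ↑G ⊆ S ∩ Set.Icc (A j) (A j + L j - 1) ∧ L j ≤ 4 * G.card)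
    (n : ℕ) (hal : Aligned A L n) :
    densCount (⋃ j, Set.Icc (A j) (A j + L j - 1)) n ≤
      (∑ j ∈ Finset.range J1, L j) + 4 * densCount S n := by
  classical
  set F : Finset ℕ := (Finset.range n).filter (fun j => A j + L j ≤ n) with hF
  have hAj : ∀ j, j ≤ A j := fun j => by
    induction j with
    | zero => omega
    | succ j ih =>
      have h1 := hsep j
      have h2 := hL1 j
      omega
  -- the union intersected with Iio n equals the biUnion over F
  have hU : (⋃ j, Set.Icc (A j) (A j + L j - 1)) ∩ Set.Iio n =
      ↑(F.biUnion (fun j => Finset.Icc (A j) (A j + L j - 1))) := by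
    ext v
    simp only [Set.mem_inter_iff, Set.mem_iUnion, Set.mem_Icc, Set.mem_Iio,
      Finset.coe_biUnion, Finset.mem_coe, Finset.mem_biUnion, Finset.mem_Icc,
      hF, Finset.mem_filter, Finset.mem_range]
    constructor
    · rintro ⟨⟨j, hj1, hj2⟩, hvn⟩
      have hAn : A j < n := lt_of_le_of_lt hj1 hvn
      have := hal j hAn
      exact ⟨j, ⟨lt_of_le_of_lt (hAj j) hAn, this⟩, hj1, hj2⟩
    · rintro ⟨j, ⟨_, hjle⟩, hj1, hj2⟩
      have := hL1 j
      exact ⟨⟨j, hj1, hj2⟩, by omega⟩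
  have hdisjI : ∀ i ∈ F, ∀ j ∈ F, i ≠ j →
      Disjoint (Finset.Icc (A i) (A i + L i - 1)) (Finset.Icc (A j) (A j + L j - 1)) := by
    intro i _ j _ hij
    rcases Nat.lt_or_ge i j with h | h
    · have := blocks_le hL1 hsep i j h
      rw [Finset.disjoint_left]
      intro v hv1 hv2
      simp only [Finset.mem_Icc] at hv1 hv2
      have := hL1 i
      omega
    · have hji : j < i := by omega
      have := blocks_le hL1 hsep j i hji
      rw [Finset.disjoint_left]
      intro v hv1 hv2
      simp only [Finset.mem_Icc] at hv1 hv2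
      have := hL1 j
      omega
  have hcardU : densCount (⋃ j, Set.Icc (A j) (A j + L j - 1)) n = ∑ j ∈ F, L j := by
    rw [densCount, Nat.card_coe_set_eq, hU, Set.ncard_coe_finset,
      Finset.card_biUnion hdisjI]
    apply Finset.sum_congr rfl
    intro j _
    rw [Nat.card_Icc]
    have := hL1 j
    omega
  rw [hcardU]
  -- split F
  rw [← Finset.sum_filter_add_sum_filter_not F (fun j => j < J1)]
  have hsmall : (∑ j ∈ F.filter (fun j => j < J1), L j) ≤ ∑ j ∈ Finset.range J1, L j := by
    apply Finset.sum_le_sum_of_subset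
    intro j hj
    simp only [Finset.mem_filter, Finset.mem_range] at hj ⊢
    exact hj.2
  have hbig : (∑ j ∈ F.filter (fun j => ¬ j < J1), L j) ≤ 4 * densCount S n := by
    choose G hG1 hG2 using hgood
    set F2 := F.filter (fun j => ¬ j < J1) with hF2
    have hmemF : ∀ j ∈ F2, J1 ≤ j ∧ A j + L j ≤ n := by
      intro j hj
      simp only [hF2, hF, Finset.mem_filter, Finset.mem_range, not_lt] at hj
      exact ⟨hj.2, hj.1.2⟩
    calc (∑ j ∈ F2, L j) ≤ ∑ j ∈ F2.attach, 4 * (G j.1 (hmemF j.1 j.2).1).card := by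
          rw [← Finset.sum_attach F2 L]
          exact Finset.sum_le_sum (fun j _ => hG2 j.1 (hmemF j.1 j.2).1)
    _ = 4 * ∑ j ∈ F2.attach, (G j.1 (hmemF j.1 j.2).1).card := by
          rw [Finset.mul_sum]
    _ = 4 * (F2.attach.biUnion (fun j => G j.1 (hmemF j.1 j.2).1)).card := by
          congr 1
          rw [Finset.card_biUnion]
          intro i _ j _ hij
          have hGsub : ∀ (t : {x // x ∈ F2}) (ht : J1 ≤ t.1),
              ↑(G t.1 ht) ⊆ Set.Icc (A t.1) (A t.1 + L t.1 - 1) :=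
            fun t ht => (hG1 t.1 ht).trans Set.inter_subset_right
          have hd := hdisjI i.1 (Finset.mem_filter.mp i.2).1 j.1
            (Finset.mem_filter.mp j.2).1 (fun h => hij (Subtype.ext h))
          rw [Finset.disjoint_left] at hd
          rw [Function.onFun, Finset.disjoint_left]
          intro v hv1 hv2
          have m1 := hGsub i (hmemF i.1 i.2).1 hv1
          have m2 := hGsub j (hmemF j.1 j.2).1 hv2
          rw [Set.mem_Icc] at m1 m2
          exact hd (Finset.mem_Icc.mpr m1) (Finset.mem_Icc.mpr m2)
    _ ≤ 4 * densCount S n := by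
          apply Nat.mul_le_mul_left
          rw [densCount, Nat.card_coe_set_eq, ← Set.ncard_coe_finset]
          apply Set.ncard_le_ncard ?_ ((Set.finite_Iio n).inter_of_right S)
          intro v hv
          simp only [Finset.coe_biUnion, Finset.mem_coe, Set.mem_iUnion] at hv
          obtain ⟨j, hj, hvG⟩ := hv
          have h1 := hG1 j.1 (hmemF j.1 j.2).1 hvG
          rcases h1 with ⟨hvS, hvI⟩
          rw [Set.mem_Icc] at hvI
          have h2 := (hmemF j.1 j.2).2
          have h3 := hL1 j.1
          exact ⟨hvS, by simp only [Set.mem_Iio]; omega⟩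
  omega

end Blocks

section Align
variable {A L : ℕ → ℕ} (hL1 : ∀ j, 1 ≤ L j) (hsep : ∀ j, A j + L j ≤ A (j + 1))
include hL1 hsep

lemma align_exists (n : ℕ) :
    ∃ n', n ≤ n' ∧ Aligned A L n' ∧
      densCount (⋃ j, Set.Icc (A j) (A j + L j - 1)) n' =
        densCount (⋃ j, Set.Icc (A j) (A j + L j - 1)) n + (n' - n) := by
  set U := ⋃ j, Set.Icc (A j) (A j + L j - 1) with hUdef
  by_cases hal : Aligned A L n
  · exact ⟨n, le_rfl, hal, by omega⟩
  · rw [Aligned] at hal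
    push_neg at hal
    obtain ⟨j, hj1, hj2⟩ := hal
    refine ⟨A j + L j, by omega, ?_, ?_⟩
    · intro j' hj'
      rcases Nat.lt_or_ge j' (j + 1) with h | h
      · rcases Nat.lt_or_ge j' j with h2 | h2
        · have := blocks_le hL1 hsep j' j h2
          omega
        · have : j' = j := by omega
          subst this
          omega
      · have := blocks_le hL1 hsep j j' h
        omega
    · have hsub : Set.Ico n (A j + L j) ⊆ U := by
        intro v hv
        rw [Set.mem_Ico] at hv
        apply Set.mem_iUnion.mpr ⟨j, _⟩
        rw [Set.mem_Icc]
        omega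
      have hsplit : U ∩ Set.Iio (A j + L j) = (U ∩ Set.Iio n) ∪ Set.Ico n (A j + L j) := by
        ext v
        simp only [Set.mem_inter_iff, Set.mem_union, Set.mem_Iio, Set.mem_Ico]
        constructor
        · rintro ⟨hvU, hvlt⟩
          rcases Nat.lt_or_ge v n with h | h
          · exact Or.inl ⟨hvU, h⟩
          · exact Or.inr ⟨h, hvlt⟩
        · rintro (⟨hvU, h⟩ | ⟨h1, h2⟩)
          · exact ⟨hvU, by omega⟩
          · exact ⟨hsub (Set.mem_Ico.mpr ⟨h1, h2⟩), h2⟩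
      have hfin1 : (U ∩ Set.Iio n).Finite := (Set.finite_Iio n).inter_of_right U
      have hfin2 : (Set.Ico n (A j + L j)).Finite := Set.finite_Ico _ _
      have hdisj : Disjoint (U ∩ Set.Iio n) (Set.Ico n (A j + L j)) :=
        Set.disjoint_left.mpr (fun v ⟨_, h1⟩ h2 => absurd (Set.mem_Ico.mp h2).1
          (by simpa using h1))
      rw [densCount, densCount, Nat.card_coe_set_eq, Nat.card_coe_set_eq,
        hsplit, Set.ncard_union_eq hdisj hfin1 hfin2, ← Finset.coe_Ico,
        Set.ncard_coe_finset, Nat.card_Ico]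

end Align

lemma coe_shift (y1 y2 : ℝ) (M : ℤ) (h : y1 = M + y2) :
    ((y1 : ℝ) : AddCircle (1:ℝ)) = ((y2 : ℝ) : AddCircle (1:ℝ)) := by
  rw [h, AddCircle.coe_add]
  have h0 : (((M:ℝ)) : AddCircle (1:ℝ)) = 0 := by
    rw [AddCircle.coe_eq_zero_iff]
    exact ⟨M, by simp⟩
  rw [h0, zero_add]

set_option maxHeartbeats 1000000 in
lemma mem_S (a d : ℕ → ℕ) (ha : IsArithSeq a) (hd : IsDSeq a d) (nk : ℕ → ℕ)
    (hnk : ∀ k, d (nk k) = a k) (s : ℕ → ℕ) (hs : StrictMono s) (j r : ℕ)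
    (hr1 : 1 ≤ r) (hrb : r < a (s j + 1) / a (s j))
    (hrlo : a (s j + 1) / a (s j) ≤ 8 * r)
    (hrhi : 4 * r ≤ 3 * (a (s j + 1) / a (s j)))
    (hb16' : 16 ≤ a (s (j+1) + 1) / a (s (j+1))) :
    (1/8 : ℝ) ≤ ‖(d (nk (s j) + (r - 1)) : ℤ) •
      ((∑' i : ℕ, (1:ℝ) / a (s i + 1) : ℝ) : AddCircle (1:ℝ))‖ := by
  set x : ℝ := ∑' i : ℕ, (1:ℝ) / a (s i + 1) with hxdef
  have hdv : d (nk (s j) + (r - 1)) = r * a (s j) :=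
    enum_val ha hd nk hnk (s j) r hr1 hrb
  have hdvd : ∀ j' < j, a (s j' + 1) ∣ r * a (s j) := by
    intro j' hj'
    exact (arith_dvd ha (by have := hs hj'; omega : s j' + 1 ≤ s j)).mul_left r
  obtain ⟨M, hM⟩ := key_decomp ha hs j (r * a (s j)) hdvd
  have hsumtail : Summable (fun i : ℕ => (1:ℝ) / a (s (i + j) + 1)) :=
    (summable_nat_add_iff j).mpr (summable_f ha hs)
  have hsplit : (∑' i : ℕ, (1:ℝ) / a (s (i + j) + 1)) =
      (1:ℝ) / a (s j + 1) + ∑' i : ℕ, (1:ℝ) / a (s (i + (j+1)) + 1) := by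
    rw [Summable.tsum_eq_zero_add hsumtail]
    congr 1
    · norm_num
    · apply tsum_congr
      intro i
      have he : i + 1 + j = i + (j + 1) := by omega
      rw [he]
  have hT1nn : 0 ≤ ∑' i : ℕ, (1:ℝ) / a (s (i + (j+1)) + 1) :=
    tail_nonneg ha hs (j+1)
  have hT1le : (∑' i : ℕ, (1:ℝ) / a (s (i + (j+1)) + 1)) ≤ 2 / a (s (j+1) + 1) :=
    tail_le ha hs (j+1)
  have haj : (0:ℝ) < a (s j) := by exact_mod_cast arith_pos ha (s j)
  have hb2j := arith_b2 ha (s j)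
  have hbjpos : (0:ℝ) < (a (s j + 1) / a (s j) : ℕ) := by
    exact_mod_cast (by omega : 0 < a (s j + 1) / a (s j))
  have hbmulj : a (s j + 1) = (a (s j + 1) / a (s j)) * a (s j) := arith_bmul ha (s j)
  set T1 : ℝ := ∑' i : ℕ, (1:ℝ) / a (s (i + (j+1)) + 1) with hT1def
  set y : ℝ := ((r * a (s j) : ℕ) : ℝ) * ∑' i : ℕ, (1:ℝ) / a (s (i + j) + 1) with hydef
  have hyform : y = (r : ℝ) / (a (s j + 1) / a (s j) : ℕ) + ((r * a (s j) : ℕ) : ℝ) * T1 := by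
    rw [hydef, hsplit, mul_add, hT1def]
    congr 1
    rw [hbmulj, Nat.mul_div_cancel _ (arith_pos ha (s j))]
    push_cast
    field_simp
  have hθnn : 0 ≤ ((r * a (s j) : ℕ) : ℝ) * T1 := mul_nonneg (by positivity) hT1nn
  have hθle : ((r * a (s j) : ℕ) : ℝ) * T1 ≤ 1/8 := by
    have hble : r * a (s j) ≤ a (s (j+1)) := by
      calc r * a (s j) ≤ (a (s j + 1) / a (s j)) * a (s j) :=
            Nat.mul_le_mul_right _ (le_of_lt hrb)
      _ = a (s j + 1) := hbmulj.symm
      _ ≤ a (s (j+1)) := ha.2.1.monotone (hs (Nat.lt_succ_self j))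
    have hbmulj' : a (s (j+1) + 1) = (a (s (j+1) + 1) / a (s (j+1))) * a (s (j+1)) :=
      arith_bmul ha (s (j+1))
    have haj1 : (0:ℝ) < a (s (j+1)) := by exact_mod_cast arith_pos ha (s (j+1))
    have hbj1pos : (0:ℝ) < (a (s (j+1) + 1) / a (s (j+1)) : ℕ) := by
      exact_mod_cast (by omega : 0 < a (s (j+1) + 1) / a (s (j+1)))
    calc ((r * a (s j) : ℕ) : ℝ) * T1 ≤ (a (s (j+1)) : ℝ) * (2 / a (s (j+1) + 1)) := by
          apply mul_le_mul _ hT1le hT1nn (by positivity)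
          exact_mod_cast hble
    _ = 2 / (a (s (j+1) + 1) / a (s (j+1)) : ℕ) := by
          rw [hbmulj', Nat.mul_div_cancel _ (arith_pos ha (s (j+1)))]
          push_cast
          field_simp
    _ ≤ 2 / 16 := by
          apply div_le_div_of_nonneg_left (by norm_num) (by norm_num)
          exact_mod_cast hb16'
    _ ≤ 1/8 := by norm_num
  have hylo : (1/8 : ℝ) ≤ y := by
    rw [hyform]
    have h1 : (1/8 : ℝ) ≤ (r:ℝ) / (a (s j + 1) / a (s j) : ℕ) := by
      rw [le_div_iff₀ hbjpos]
      have h2 : ((a (s j + 1) / a (s j) : ℕ) : ℝ) ≤ 8 * r := by exact_mod_cast hrlo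
      linarith
    linarith
  have hyhi : y ≤ 7/8 := by
    rw [hyform]
    have h1 : (r:ℝ) / (a (s j + 1) / a (s j) : ℕ) ≤ 3/4 := by
      rw [div_le_iff₀ hbjpos]
      have h2 : ((4 * r : ℕ) : ℝ) ≤ ((3 * (a (s j + 1) / a (s j)) : ℕ) : ℝ) := by
        exact_mod_cast hrhi
      push_cast at h2
      linarith
    linarith
  have hcoe : ((((r * a (s j) : ℕ) : ℝ) * x : ℝ) : AddCircle (1:ℝ)) =
      ((y : ℝ) : AddCircle (1:ℝ)) := coe_shift _ _ M (by rw [hM, hydef])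
  rw [mySmul_coe]
  have hcast : ((d (nk (s j) + (r - 1)) : ℤ) : ℝ) * x = ((r * a (s j) : ℕ) : ℝ) * x := by
    rw [hdv]
    push_cast
    ring
  rw [hcast, hcoe]
  exact myNorm_ge y ⟨hylo, hyhi⟩

theorem stmt_11 (a d : ℕ → ℕ) (ha : IsArithSeq a) (hd : IsDSeq a d)
    (nk : ℕ → ℕ) (hnk : ∀ k, d (nk k) = a k)
    (s : ℕ → ℕ) (hs : StrictMono s)
    (hbdiv : Tendsto (fun j => a (s j + 1) / a (s j)) atTop atTop)
    (hupp : 0 < upperDensity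
      (⋃ j : ℕ, Set.Icc (nk (s j)) (nk (s j) + (a (s j + 1) / a (s j)) - 2))) :
    ((∑' j : ℕ, (1 : ℝ) / a (s j + 1) : ℝ) : AddCircle (1:ℝ)) ∈
        charSet (fun n => (a n : ℤ)) ∧
      ((∑' j : ℕ, (1 : ℝ) / a (s j + 1) : ℝ) : AddCircle (1:ℝ)) ∉
        sChar (fun n => (d n : ℤ)) := by
  constructor
  · -- Part 1 : x ∈ charSet a
    set x : ℝ := ∑' j : ℕ, (1 : ℝ) / a (s j + 1) with hxdef
    rw [charSet, Set.mem_setOf_eq, NormedAddCommGroup.tendsto_nhds_zero]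
    intro ε hε
    obtain ⟨B, hB⟩ := exists_nat_gt (2 / ε)
    have hBpos : 0 < (B:ℝ) := lt_trans (by positivity) hB
    obtain ⟨J, hJ⟩ := (Filter.tendsto_atTop.mp hbdiv B).exists_forall_of_atTop
    filter_upwards [Filter.eventually_ge_atTop (s J + 1)] with n hn
    have hex : ∃ j, n ≤ s j := ⟨n, hs.le_apply⟩
    set K := Nat.find hex with hKdef
    have hK : n ≤ s K := Nat.find_spec hex
    have hKlt : ∀ j < K, s j < n := fun j hj => by
      have := Nat.find_min hex hj; omega
    have hJK : J ≤ K := by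
      by_contra h
      push_neg at h
      have h1 : s K ≤ s J := hs.monotone (by omega)
      omega
    have hv : ∀ j < K, a (s j + 1) ∣ a n :=
      fun j hj => arith_dvd ha (by have := hKlt j hj; omega)
    obtain ⟨M, hM⟩ := key_decomp ha hs K (a n) hv
    set T : ℝ := ∑' j : ℕ, (1:ℝ) / a (s (j + K) + 1) with hTdef
    have hTnn : 0 ≤ T := tail_nonneg ha hs K
    have hTle : T ≤ 2 / a (s K + 1) := tail_le ha hs K
    set bK : ℕ := a (s K + 1) / a (s K) with hbKdef
    have hbmul : a (s K + 1) = bK * a (s K) := arith_bmul ha (s K)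
    have hbB : B ≤ bK := hJ K hJK
    have haKpos : (0:ℝ) < a (s K) := by exact_mod_cast arith_pos ha (s K)
    have hbKpos : (0:ℝ) < bK := by
      have h2 := arith_b2 ha (s K)
      exact_mod_cast (by omega : 0 < bK)
    calc ‖(a n : ℤ) • ((x : ℝ) : AddCircle (1:ℝ))‖
        = ‖(((a n : ℝ) * x : ℝ) : AddCircle (1:ℝ))‖ := by
          rw [mySmul_coe]
          norm_num
    _ ≤ |(a n : ℝ) * x - M| := myNorm_le _ M
    _ = (a n : ℝ) * T := by
          rw [hM]
          rw [add_sub_cancel_left]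
          exact abs_of_nonneg (mul_nonneg (by positivity) hTnn)
    _ ≤ (a (s K) : ℝ) * (2 / a (s K + 1)) := by
          apply mul_le_mul _ hTle hTnn (by positivity)
          exact_mod_cast ha.2.1.monotone hK
    _ = 2 / bK := by
          rw [hbmul]
          push_cast
          field_simp
    _ ≤ 2 / B := by
          apply div_le_div_of_nonneg_left (by norm_num) hBpos
          exact_mod_cast hbB
    _ < ε := by
          rw [div_lt_iff₀ hBpos]
          rw [div_lt_iff₀ hε] at hB
          linarith
  · -- Part 2
    intro hmem
    set x : ℝ := ∑' j : ℕ, (1 : ℝ) / a (s j + 1) with hxdef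
    set S : Set ℕ := {n : ℕ | (1/8:ℝ) ≤ ‖(d n : ℤ) • ((x:ℝ) : AddCircle (1:ℝ))‖} with hSdef
    have hS : HasDensity S 0 := hmem (1/8) (by norm_num)
    set A : ℕ → ℕ := fun j => nk (s j) with hAdef
    set L : ℕ → ℕ := fun j => a (s j + 1) / a (s j) - 1 with hLdef
    have hb2 : ∀ k, 2 ≤ a (k+1) / a k := arith_b2 ha
    have hL1 : ∀ j, 1 ≤ L j := by
      intro j
      have h := hb2 (s j)
      simp only [hLdef]
      generalize hbe : a (s j + 1) / a (s j) = b at h ⊢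
      omega
    have hnkmono := nk_mono ha hd nk hnk
    have hsep : ∀ j, A j + L j ≤ A (j + 1) := by
      intro j
      have h1 := enum_succ ha hd nk hnk (s j)
      have h2 : nk (s j + 1) ≤ nk (s (j+1)) :=
        hnkmono.monotone (hs (Nat.lt_succ_self j))
      simp only [hAdef, hLdef]
      generalize hbe : a (s j + 1) / a (s j) = b at h1 ⊢
      omega
    have hUeq : (⋃ j : ℕ, Set.Icc (nk (s j)) (nk (s j) + (a (s j + 1) / a (s j)) - 2)) =
        ⋃ j, Set.Icc (A j) (A j + L j - 1) := by
      apply Set.iUnion_congr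
      intro j
      have h := hb2 (s j)
      simp only [hAdef, hLdef]
      generalize hbe : a (s j + 1) / a (s j) = b at h ⊢
      have he : nk (s j) + b - 2 = nk (s j) + (b - 1) - 1 := by omega
      rw [he]
    rw [hUeq] at hupp
    obtain ⟨J1, hJ1⟩ := (Filter.tendsto_atTop.mp hbdiv 16).exists_forall_of_atTop
    have hgood : ∀ j, J1 ≤ j → ∃ G : Finset ℕ,
        ↑G ⊆ S ∩ Set.Icc (A j) (A j + L j - 1) ∧ L j ≤ 4 * G.card := by
      intro j hj
      have hb16 : 16 ≤ a (s j + 1) / a (s j) := hJ1 j hj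
      have hb16' : 16 ≤ a (s (j+1) + 1) / a (s (j+1)) := hJ1 (j+1) (by omega)
      generalize hbjdef : a (s j + 1) / a (s j) = bj at hb16
      have hLj : L j = bj - 1 := by simp only [hLdef]; rw [hbjdef]
      have hdm := Nat.div_add_mod bj 4
      have hm4 : bj % 4 < 4 := Nat.mod_lt _ (by norm_num)
      refine ⟨Finset.Icc (A j + (bj/4 - 1)) (A j + (3*(bj/4) - 1)), ?_, ?_⟩
      · intro v hv
        simp only [Finset.coe_Icc, Set.mem_Icc] at hv
        constructor
        · -- v ∈ S
          obtain ⟨r, hrdef⟩ : ∃ r, v - A j + 1 = r := ⟨_, rfl⟩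
          have hr1 : 1 ≤ r := by omega
          have hrb : r < bj := by omega
          have hrlo : bj ≤ 8 * r := by omega
          have hrhi : 4 * r ≤ 3 * bj := by omega
          have hvr : v = A j + (r - 1) := by omega
          have hmm := mem_S a d ha hd nk hnk s hs j r hr1
            (hbjdef ▸ hrb) (hbjdef ▸ hrlo) (hbjdef ▸ hrhi) hb16'
          rw [hSdef]
          simp only [Set.mem_setOf_eq]
          have hvr' : v = nk (s j) + (r - 1) := by
            simp only [hAdef] at hvr; exact hvr
          rw [hvr']
          exact hmm
        · simp only [Set.mem_Icc]
          rw [hLj]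
          omega
      · rw [Nat.card_Icc, hLj]
        omega
    -- density contradiction
    set U : Set ℕ := ⋃ j, Set.Icc (A j) (A j + L j - 1) with hUdef
    set C : ℕ := ∑ j ∈ Finset.range J1, L j with hCdef
    have hten : Tendsto (fun n => (densCount U n : ℝ) / n) atTop (𝓝 0) := by
      rw [Metric.tendsto_atTop]
      intro ε hε
      obtain ⟨N0, hN0⟩ := Metric.tendsto_atTop.mp hS (ε/8) (by positivity)
      obtain ⟨N2, hN2⟩ := exists_nat_gt ((2*C)/ε)
      refine ⟨max (max N0 1) N2, ?_⟩
      intro n hn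
      have hn0 : N0 ≤ n := le_trans (le_trans (le_max_left _ _) (le_max_left _ _)) hn
      have hn1 : 1 ≤ n := le_trans (le_trans (le_max_right _ _) (le_max_left _ _)) hn
      have hnN2 : N2 ≤ n := le_trans (le_max_right _ _) hn
      obtain ⟨n', hnn', hal, hcnt⟩ := align_exists hL1 hsep n
      have hn'1 : 1 ≤ n' := le_trans hn1 hnn'
      have hnR : (0:ℝ) < n := by exact_mod_cast hn1
      have hn'R : (0:ℝ) < n' := by exact_mod_cast hn'1
      have hcle : densCount U n ≤ n := densCount_le hL1 hsep U n
      have h1 : (densCount U n : ℝ) / n ≤ (densCount U n' : ℝ) / n' := by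
        rw [div_le_div_iff₀ hnR hn'R]
        have e1 : (densCount U n' : ℝ) = densCount U n + ((n' - n : ℕ) : ℝ) := by
          rw [hcnt]; push_cast; ring
        have e2 : (n' : ℝ) = n + ((n' - n : ℕ) : ℝ) := by
          rw [Nat.cast_sub hnn']; ring
        have e3 : (densCount U n : ℝ) ≤ n := by exact_mod_cast hcle
        have e4 : (0:ℝ) ≤ ((n' - n : ℕ) : ℝ) := by positivity
        rw [e1, e2]
        nlinarith
      have h2 : (densCount U n' : ℝ) ≤ C + 4 * densCount S n' := by
        exact_mod_cast blocks_count hL1 hsep S J1 hgood n' hal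
      have h3 : (densCount S n' : ℝ) / n' < ε/8 := by
        have h4 := hN0 n' (le_trans hn0 hnn')
        rw [Real.dist_eq, sub_zero, abs_of_nonneg (by positivity)] at h4
        exact h4
      have h4 : (C : ℝ) / n < ε/2 := by
        rw [div_lt_iff₀ hnR]
        rw [div_lt_iff₀ hε] at hN2
        have hN2n : (N2 : ℝ) ≤ n := by exact_mod_cast hnN2
        nlinarith
      rw [Real.dist_eq, sub_zero, abs_of_nonneg (by positivity)]
      calc (densCount U n : ℝ) / n ≤ (densCount U n' : ℝ) / n' := h1
      _ ≤ ((C : ℝ) + 4 * densCount S n') / n' := by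
            have h2' : (densCount U n' : ℝ) ≤ (C : ℝ) + 4 * densCount S n' := by
              push_cast at h2 ⊢
              linarith
            gcongr
      _ = (C : ℝ)/n' + 4 * ((densCount S n' : ℝ)/n') := by
            field_simp
      _ ≤ (C : ℝ)/n + 4 * ((densCount S n' : ℝ)/n') := by
            have h5 : (C:ℝ)/n' ≤ (C:ℝ)/n := by
              apply div_le_div_of_nonneg_left (by positivity) hnR
              exact_mod_cast hnn'
            linarith
      _ < ε/2 + 4 * (ε/8) := by nlinarith
      _ = ε := by ring
    have hlim : upperDensity U = 0 := hten.limsup_eq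
    rw [hlim] at hupp
    exact lt_irrefl 0 hupp
end

section
/- If (a_n) is a b-divergent arithmetic sequence (i.e., b_n = a_n/a_{n-1} → ∞), then t_{(a_n)}(T) is not contained in t^s_{(d_n)}(T); consequently t^s_{(a_n)}(T) is not contained in t^s_{(d_n)}(T). -/
open Filter Topology

lemma ncard_Iio (n : ℕ) : (Set.Iio n).ncard = n := by
  rw [← Finset.coe_Iio, Set.ncard_coe_finset, Nat.card_Iio]

lemma ncard_Ico (m n : ℕ) : (Set.Ico m n).ncard = n - m := by
  rw [← Finset.coe_Ico, Set.ncard_coe_finset, Nat.card_Ico]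

lemma densCount_le_of_subset {A : Set ℕ} {N : ℕ} (h : A ⊆ Set.Iio N) (n : ℕ) :
    densCount A n ≤ N := by
  rw [densCount_eq_ncard]
  calc (A ∩ Set.Iio n).ncard ≤ (Set.Iio N).ncard :=
        Set.ncard_le_ncard (fun x hx => h hx.1) (Set.finite_Iio N)
    _ = N := ncard_Iio N

/-- A finite lower set in ℕ is an initial segment. -/
lemma lowerSet_eq_Iio (P : Set ℕ) (hfin : P.Finite)
    (hlow : ∀ i j : ℕ, i ≤ j → j ∈ P → i ∈ P) : P = Set.Iio P.ncard := by
  have hne : Pᶜ.Nonempty := by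
    rcases Set.Infinite.nonempty ((Set.infinite_univ (α := ℕ)).diff hfin) with ⟨x, hx⟩
    exact ⟨x, hx.2⟩
  have hkey : P = Set.Iio (sInf Pᶜ) := by
    ext j
    constructor
    · intro hj
      by_contra hc
      simp only [Set.mem_Iio, not_lt] at hc
      exact (Nat.sInf_mem hne) (hlow _ _ hc hj)
    · intro hj
      by_contra hc
      exact Nat.notMem_of_lt_sInf hj hc
  rw [hkey, ncard_Iio]

/-- For strictly monotone `d`, `d n < m ↔ n < #(range d ∩ [0,m))`. -/
lemma strictMono_lt_iff_lt_densCount (d : ℕ → ℕ) (hd : StrictMono d) (n m : ℕ) :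
    d n < m ↔ n < densCount (Set.range d) m := by
  have hP : Set.range d ∩ Set.Iio m = d '' {k | d k < m} := by
    ext x
    constructor
    · rintro ⟨⟨k, rfl⟩, hx⟩; exact ⟨k, hx, rfl⟩
    · rintro ⟨k, hk, rfl⟩; exact ⟨⟨k, rfl⟩, hk⟩
  have hfin : ({k | d k < m} : Set ℕ).Finite := by
    apply (Set.finite_Iio m).subset
    intro k hk
    exact lt_of_le_of_lt (hd.le_apply) hk
  have hcard : densCount (Set.range d) m = ({k | d k < m} : Set ℕ).ncard := by
    rw [densCount_eq_ncard, hP, Set.ncard_image_of_injective _ hd.injective]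
  have hlow := lowerSet_eq_Iio {k | d k < m} hfin
    (fun i j hij hj => lt_of_le_of_lt (hd.monotone hij) hj)
  rw [hcard]
  constructor
  · intro h
    have : n ∈ {k | d k < m} := h
    rw [hlow] at this
    exact this
  · intro h
    have : n ∈ Set.Iio ({k | d k < m} : Set ℕ).ncard := h
    rw [← hlow] at this
    exact this

lemma norm_unitAddCircle_eq (y : ℝ) : ‖(y : AddCircle (1:ℝ))‖ = |y - round y| := by
  rw [AddCircle.norm_eq]; norm_num

lemma norm_coe_le_abs (y : ℝ) : ‖(y : AddCircle (1:ℝ))‖ ≤ |y| := by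
  rw [norm_unitAddCircle_eq]
  simpa using round_le y 0

lemma norm_coe_ge_of_mem {y : ℝ} (h1 : 1/4 ≤ y) (h2 : y ≤ 3/4) :
    1/4 ≤ ‖(y : AddCircle (1:ℝ))‖ := by
  rw [norm_unitAddCircle_eq]
  rcases le_or_gt (round y) 0 with hz | hz
  · have : (round y : ℝ) ≤ 0 := by exact_mod_cast hz
    rw [abs_of_nonneg (by linarith)]; linarith
  · have : (1 : ℝ) ≤ (round y : ℝ) := by exact_mod_cast hz
    rw [abs_of_nonpos (by linarith)]; linarith

lemma natCoe_addCircle_eq_zero (z : ℕ) : ((z : ℝ) : AddCircle (1:ℝ)) = 0 := by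
  rw [AddCircle.coe_eq_zero_iff]
  exact ⟨z, by simp⟩

lemma coe_add_nat (w : ℝ) (z : ℕ) : ((z + w : ℝ) : AddCircle (1:ℝ)) = (w : AddCircle (1:ℝ)) := by
  rw [AddCircle.coe_add, natCoe_addCircle_eq_zero, zero_add]

lemma zsmul_coe (n : ℕ) (x : ℝ) :
    (n : ℤ) • ((x : ℝ) : AddCircle (1:ℝ)) = ((n * x : ℝ) : AddCircle (1:ℝ)) := by
  rw [natCast_zsmul, ← AddCircle.coe_nsmul, nsmul_eq_mul]

section seq
variable {a : ℕ → ℕ}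

lemma apos (ha0 : a 0 = 1) (hmono : StrictMono a) (k : ℕ) : 0 < a k :=
  lt_of_lt_of_le (by omega : 0 < a 0) (hmono.monotone (Nat.zero_le k))

lemma advd_le (hdvd : ∀ n, a n ∣ a (n+1)) : ∀ {i j : ℕ}, i ≤ j → a i ∣ a j := by
  intro i j hij
  induction j with
  | zero => simp_all
  | succ n ih =>
    rcases Nat.lt_or_ge i (n+1) with h | h
    · exact (ih (by omega)).trans (hdvd n)
    · have : i = n + 1 := by omega
      subst this; exact dvd_rfl

lemma a_succ_eq (hdvd : ∀ n, a n ∣ a (n+1)) (k : ℕ) :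
    a (k+1) = a k * (a (k+1) / a k) :=
  (Nat.mul_div_cancel' (hdvd k)).symm

lemma b_ge_two (ha0 : a 0 = 1) (hmono : StrictMono a) (hdvd : ∀ n, a n ∣ a (n+1)) (k : ℕ) :
    2 ≤ a (k+1) / a k := by
  have h1 := a_succ_eq hdvd k
  have h2 : a k < a (k+1) := hmono (by omega)
  have h3 := apos ha0 hmono k
  nlinarith [Nat.lt_or_ge (a (k+1) / a k) 2]

lemma a_growth (ha0 : a 0 = 1) (hmono : StrictMono a) (hdvd : ∀ n, a n ∣ a (n+1)) (k : ℕ) :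
    ∀ m, a k * 2 ^ m ≤ a (k + m) := by
  intro m
  induction m with
  | zero => simp
  | succ n ih =>
    have h1 := a_succ_eq hdvd (k + n)
    have h2 := b_ge_two ha0 hmono hdvd (k + n)
    have h3 : a (k + n) * 2 ≤ a (k + n + 1) := by nlinarith
    calc a k * 2 ^ (n+1) = (a k * 2 ^ n) * 2 := by ring
      _ ≤ a (k + n) * 2 := by omega
      _ ≤ a (k + (n+1)) := by rw [show k + (n+1) = k + n + 1 by omega]; omega

lemma summable_inv_a (ha0 : a 0 = 1) (hmono : StrictMono a) (hdvd : ∀ n, a n ∣ a (n+1))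
    (k : ℕ) : Summable (fun m => 1 / (a (m + k) : ℝ)) := by
  have hsum : Summable (fun m : ℕ => (1 / (a k : ℝ)) * (1/2) ^ m) :=
    (summable_geometric_two).mul_left _
  apply Summable.of_nonneg_of_le (fun m => by positivity) _ hsum
  intro m
  have h1 := a_growth ha0 hmono hdvd k m
  have hk := apos ha0 hmono k
  have h2 : (a k : ℝ) * 2 ^ m ≤ (a (m + k) : ℝ) := by
    rw [Nat.add_comm m k]; exact_mod_cast h1
  have hm : (0:ℝ) < (a (m + k) : ℝ) := by
    have := apos ha0 hmono (m + k); exact_mod_cast this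
  have hak : (0:ℝ) < (a k : ℝ) := by exact_mod_cast hk
  rw [div_le_iff₀ hm, one_div, mul_assoc, inv_mul_eq_div, le_div_iff₀ hak]
  have hh : ((1:ℝ)/2)^m * ((a k:ℝ) * 2^m) = (a k : ℝ) := by
    rw [div_pow, one_pow]; field_simp
  have hpos : (0:ℝ) < ((1:ℝ)/2)^m := by positivity
  nlinarith

end seq

noncomputable def tailSum (a : ℕ → ℕ) (k : ℕ) : ℝ := ∑' m, 1 / (a (m + k) : ℝ)

section seq2
variable {a : ℕ → ℕ} (ha0 : a 0 = 1) (hmono : StrictMono a) (hdvd : ∀ n, a n ∣ a (n+1))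

include ha0 hmono hdvd

lemma tail_le_s12 (k : ℕ) : tailSum a k ≤ 2 / (a k : ℝ) := by
  have hs := summable_inv_a ha0 hmono hdvd k
  have hg : Summable (fun m : ℕ => (1 / (a k : ℝ)) * (1/2) ^ m) :=
    (summable_geometric_two).mul_left _
  have hle : ∀ m : ℕ, 1 / (a (m + k) : ℝ) ≤ (1 / (a k : ℝ)) * (1/2) ^ m := by
    intro m
    have h1 := a_growth ha0 hmono hdvd k m
    have hk := apos ha0 hmono k
    have hm := apos ha0 hmono (m + k)
    have h2 : (a k : ℝ) * 2 ^ m ≤ (a (m + k) : ℝ) := by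
      rw [Nat.add_comm m k]; exact_mod_cast h1
    rw [div_le_iff₀ (by exact_mod_cast hm), one_div, mul_assoc, inv_mul_eq_div,
      le_div_iff₀ (by exact_mod_cast hk)]
    have hh : ((1:ℝ)/2)^m * ((a k:ℝ) * 2^m) = (a k : ℝ) := by
      rw [div_pow, one_pow]; field_simp
    have hpos : (0:ℝ) < ((1:ℝ)/2)^m := by positivity
    nlinarith
  calc tailSum a k ≤ ∑' m : ℕ, (1 / (a k : ℝ)) * (1/2) ^ m := Summable.tsum_le_tsum hle hs hg
    _ = (1 / (a k : ℝ)) * 2 := by rw [tsum_mul_left, tsum_geometric_two]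
    _ = 2 / (a k : ℝ) := by ring

lemma tail_ge (k : ℕ) : 1 / (a k : ℝ) ≤ tailSum a k := by
  have hs := summable_inv_a ha0 hmono hdvd k
  have h := Summable.le_tsum hs 0 (fun j _ => by positivity)
  simpa [tailSum] using h

lemma tail_split (k : ℕ) : tailSum a k = 1 / (a k : ℝ) + tailSum a (k+1) := by
  have hs := summable_inv_a ha0 hmono hdvd k
  have h := Summable.tsum_eq_zero_add hs
  rw [tailSum, h]
  congr 1
  · simp
  · rw [tailSum]
    apply tsum_congr
    intro m
    have h2 : m + 1 + k = m + (k+1) := by omega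
    rw [h2]

lemma tail_pos (k : ℕ) : 0 < tailSum a k := by
  have h1 := tail_ge ha0 hmono hdvd k
  have h2 := apos ha0 hmono k
  have : (0:ℝ) < 1 / (a k : ℝ) := by
    have : (0:ℝ) < (a k : ℝ) := by exact_mod_cast h2
    positivity
  linarith

end seq2

section seq3
variable {a : ℕ → ℕ} (ha0 : a 0 = 1) (hmono : StrictMono a) (hdvd : ∀ n, a n ∣ a (n+1))

include ha0 hmono hdvd

lemma cast_apos (k : ℕ) : (0:ℝ) < (a k : ℝ) := by
  exact_mod_cast apos ha0 hmono k

lemma cast_a_succ (k : ℕ) : (a (k+1) : ℝ) = (a k : ℝ) * ((a (k+1) / a k : ℕ) : ℝ) := by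
  exact_mod_cast a_succ_eq hdvd k

lemma cast_b_pos (k : ℕ) : (0:ℝ) < ((a (k+1) / a k : ℕ) : ℝ) := by
  have := b_ge_two ha0 hmono hdvd k
  have : (2:ℝ) ≤ ((a (k+1) / a k : ℕ) : ℝ) := by exact_mod_cast this
  linarith

lemma t_ge (k : ℕ) :
    1 / ((a (k+1) / a k : ℕ) : ℝ) ≤ (a k : ℝ) * tailSum a (k+1) := by
  have h1 := tail_ge ha0 hmono hdvd (k+1)
  have hk := cast_apos ha0 hmono hdvd k
  have hb := cast_b_pos ha0 hmono hdvd k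
  have hs := cast_a_succ ha0 hmono hdvd k
  have h2 : (a k : ℝ) * (1 / (a (k+1) : ℝ)) ≤ (a k : ℝ) * tailSum a (k+1) := by
    apply mul_le_mul_of_nonneg_left h1 hk.le
  calc 1 / ((a (k+1) / a k : ℕ) : ℝ) = (a k : ℝ) * (1 / (a (k+1) : ℝ)) := by
        rw [hs]; field_simp
    _ ≤ _ := h2

lemma t_le (k : ℕ) :
    (a k : ℝ) * tailSum a (k+1) ≤
      1 / ((a (k+1) / a k : ℕ) : ℝ) +
      2 / (((a (k+1) / a k : ℕ) : ℝ) * ((a (k+2) / a (k+1) : ℕ) : ℝ)) := by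
  have hk := cast_apos ha0 hmono hdvd k
  have hk2 := cast_apos ha0 hmono hdvd (k+2)
  have hb := cast_b_pos ha0 hmono hdvd k
  have hb1 := cast_b_pos ha0 hmono hdvd (k+1)
  have hs1 := cast_a_succ ha0 hmono hdvd k
  have hs2 := cast_a_succ ha0 hmono hdvd (k+1)
  have hsplit := tail_split ha0 hmono hdvd (k+1)
  have htail2 := tail_le_s12 ha0 hmono hdvd (k+2)
  have key : tailSum a (k+1) ≤ 1 / (a (k+1) : ℝ) + 2 / (a (k+2) : ℝ) := by
    rw [hsplit]; linarith
  calc (a k : ℝ) * tailSum a (k+1)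
      ≤ (a k : ℝ) * (1 / (a (k+1) : ℝ) + 2 / (a (k+2) : ℝ)) :=
        mul_le_mul_of_nonneg_left key hk.le
    _ = 1 / ((a (k+1) / a k : ℕ) : ℝ) +
        2 / (((a (k+1) / a k : ℕ) : ℝ) * ((a (k+2) / a (k+1) : ℕ) : ℝ)) := by
        rw [show (k+1)+1 = k+2 from rfl] at hs2
        rw [hs2, hs1]
        field_simp

lemma congruence (k : ℕ) : ∃ z : ℕ,
    (a k : ℝ) * tailSum a 0 = (z : ℝ) + (a k : ℝ) * tailSum a (k+1) := by
  have hs : Summable (fun m : ℕ => 1 / (a m : ℝ)) := by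
    have := summable_inv_a ha0 hmono hdvd 0
    simpa using this
  have hsplit := Summable.sum_add_tsum_nat_add (f := fun m : ℕ => 1 / (a m : ℝ)) (k+1) hs
  have hx : tailSum a 0 = (∑ i ∈ Finset.range (k+1), 1 / (a i : ℝ)) + tailSum a (k+1) := by
    rw [tailSum, tailSum]
    rw [show (∑' (m : ℕ), 1 / ((a (m + 0):ℕ) : ℝ)) = ∑' (m : ℕ), 1 / ((a m :ℕ): ℝ) from
      tsum_congr (fun m => by rw [Nat.add_zero])]
    rw [← hsplit]
  refine ⟨∑ i ∈ Finset.range (k+1), a k / a i, ?_⟩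
  have hz : ((∑ i ∈ Finset.range (k+1), a k / a i : ℕ) : ℝ)
      = (a k : ℝ) * ∑ i ∈ Finset.range (k+1), 1 / (a i : ℝ) := by
    push_cast [Finset.mul_sum]
    apply Finset.sum_congr rfl
    intro i hi
    rw [Finset.mem_range] at hi
    have hdvd' : a i ∣ a k := advd_le hdvd (by omega)
    have hipos := apos ha0 hmono i
    rw [Nat.cast_div hdvd' (by exact_mod_cast hipos.ne')]
    field_simp
  rw [hx, mul_add, hz]

end seq3

lemma hasDensity_zero_of_subset_Iio {A : Set ℕ} {N : ℕ} (h : A ⊆ Set.Iio N) :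
    HasDensity A 0 := by
  rw [HasDensity]
  refine squeeze_zero (g := fun n : ℕ => (N : ℝ) / (n:ℝ)) (fun n => by positivity) (fun n => ?_)
    (tendsto_const_div_atTop_nhds_zero_nat (N : ℝ))
  rcases Nat.eq_zero_or_pos n with hn | hn
  · simp [hn]
  · have h1 : (densCount A n : ℝ) ≤ (N : ℝ) := by
      exact_mod_cast densCount_le_of_subset h n
    have h2 : (0:ℝ) < (n : ℝ) := by exact_mod_cast hn
    show (densCount A n : ℝ) / (n:ℝ) ≤ (N : ℝ) / (n:ℝ)
    gcongr

section main
variable {a : ℕ → ℕ} (ha0 : a 0 = 1) (hmono : StrictMono a) (hdvd : ∀ n, a n ∣ a (n+1))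
  (hbdiv : Tendsto (fun n => a (n + 1) / a n) atTop atTop)

include ha0 hmono hdvd hbdiv

lemma tendsto_a_smul :
    Tendsto (fun n => ((a n : ℤ) • ((tailSum a 0 : ℝ) : AddCircle (1:ℝ))))
      atTop (𝓝 0) := by
  rw [tendsto_zero_iff_norm_tendsto_zero]
  apply squeeze_zero (fun n => norm_nonneg _)
    (g := fun n => 2 / ((a (n+1) / a n : ℕ) : ℝ))
  · intro n
    obtain ⟨z, hz⟩ := congruence ha0 hmono hdvd n
    have heq : (a n : ℤ) • ((tailSum a 0 : ℝ) : AddCircle (1:ℝ))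
        = (((a n : ℝ) * tailSum a (n+1) : ℝ) : AddCircle (1:ℝ)) := by
      rw [zsmul_coe, hz, coe_add_nat]
    rw [heq]
    have h1 := norm_coe_le_abs ((a n : ℝ) * tailSum a (n+1))
    have h2 := t_le ha0 hmono hdvd n
    have h3 := t_ge ha0 hmono hdvd n
    have hb := cast_b_pos ha0 hmono hdvd n
    have hb1 : (2:ℝ) ≤ ((a (n+2) / a (n+1) : ℕ) : ℝ) := by
      exact_mod_cast b_ge_two ha0 hmono hdvd (n+1)
    have habs : |(a n : ℝ) * tailSum a (n+1)| = (a n : ℝ) * tailSum a (n+1) := by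
      apply abs_of_pos
      calc (0:ℝ) < 1 / ((a (n+1) / a n : ℕ) : ℝ) := by positivity
        _ ≤ _ := h3
    rw [habs] at h1
    have h4 : 2 / (((a (n+1) / a n : ℕ) : ℝ) * ((a (n+2) / a (n+1) : ℕ) : ℝ))
        ≤ 1 / ((a (n+1) / a n : ℕ) : ℝ) := by
      rw [div_le_div_iff₀ (by positivity) (by positivity)]
      nlinarith
    calc ‖_‖ ≤ (a n : ℝ) * tailSum a (n+1) := h1
      _ ≤ _ := h2
      _ ≤ 2 / ((a (n+1) / a n : ℕ) : ℝ) := by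
          have hsum : (2:ℝ) / ((a (n+1) / a n : ℕ) : ℝ)
              = 1 / ((a (n+1) / a n : ℕ) : ℝ) + 1 / ((a (n+1) / a n : ℕ) : ℝ) := by ring
          linarith
  · have hcomp : Tendsto (fun n => ((a (n+1) / a n : ℕ) : ℝ)) atTop atTop :=
      tendsto_natCast_atTop_atTop.comp hbdiv
    exact hcomp.const_div_atTop 2 |>.congr (fun n => rfl)

end main

section blocks
variable {a : ℕ → ℕ} (ha0 : a 0 = 1) (hmono : StrictMono a) (hdvd : ∀ n, a n ∣ a (n+1))

include ha0 hmono hdvd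

lemma elem_bounds {j r : ℕ} (h1 : 1 ≤ r) (h2 : r < a (j+1) / a j) :
    a j ≤ r * a j ∧ r * a j < a (j+1) := by
  have hab := a_succ_eq hdvd j
  have hp := apos ha0 hmono j
  constructor
  · nlinarith
  · nlinarith

lemma block_eq (k : ℕ) :
    {m : ℕ | ∃ j r : ℕ, 1 ≤ r ∧ r < a (j + 1) / a j ∧ m = r * a j} ∩ Set.Iio (a (k+1)) =
    ({m : ℕ | ∃ j r : ℕ, 1 ≤ r ∧ r < a (j + 1) / a j ∧ m = r * a j} ∩ Set.Iio (a k)) ∪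
      ((fun r => r * a k) '' Set.Ico 1 (a (k+1) / a k)) := by
  ext m
  constructor
  · rintro ⟨⟨j, r, h1, h2, rfl⟩, hlt⟩
    rcases lt_trichotomy j k with hj | rfl | hj
    · left
      refine ⟨⟨j, r, h1, h2, rfl⟩, ?_⟩
      have := (elem_bounds ha0 hmono hdvd h1 h2).2
      exact lt_of_lt_of_le this (hmono.monotone (by omega))
    · right
      exact ⟨r, ⟨h1, h2⟩, rfl⟩
    · exfalso
      have hge : a (k+1) ≤ a j := hmono.monotone (by omega)
      have := (elem_bounds ha0 hmono hdvd h1 h2).1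
      simp only [Set.mem_Iio] at hlt
      omega
  · rintro (⟨hm, hlt⟩ | ⟨r, ⟨h1, h2⟩, rfl⟩)
    · exact ⟨hm, lt_of_lt_of_le hlt (hmono.monotone (by omega))⟩
    · refine ⟨⟨k, r, h1, h2, rfl⟩, ?_⟩
      exact (elem_bounds ha0 hmono hdvd h1 h2).2

lemma dset_count_zero :
    densCount {m : ℕ | ∃ j r : ℕ, 1 ≤ r ∧ r < a (j + 1) / a j ∧ m = r * a j} (a 0) = 0 := by
  rw [densCount_eq_ncard]
  convert Set.ncard_empty ℕ
  rw [Set.eq_empty_iff_forall_notMem]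
  rintro m ⟨⟨j, r, h1, h2, rfl⟩, hlt⟩
  have := (elem_bounds ha0 hmono hdvd h1 h2).1
  have hp := apos ha0 hmono j
  simp only [Set.mem_Iio, ha0] at hlt
  omega

lemma dset_count_rec (k : ℕ) :
    densCount {m : ℕ | ∃ j r : ℕ, 1 ≤ r ∧ r < a (j + 1) / a j ∧ m = r * a j} (a (k+1)) =
    densCount {m : ℕ | ∃ j r : ℕ, 1 ≤ r ∧ r < a (j + 1) / a j ∧ m = r * a j} (a k)
      + (a (k+1) / a k - 1) := by
  have hp := apos ha0 hmono k
  rw [densCount_eq_ncard, densCount_eq_ncard, block_eq ha0 hmono hdvd k]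
  rw [Set.ncard_union_eq ?dis ?f1 ?f2]
  case dis =>
    rw [Set.disjoint_left]
    rintro m ⟨hm, hlt⟩ ⟨r, ⟨h1, h2⟩, rfl⟩
    have := (elem_bounds ha0 hmono hdvd h1 h2).1
    simp only [Set.mem_Iio] at hlt
    omega
  case f1 => exact (Set.finite_Iio (a k)).subset Set.inter_subset_right
  case f2 => exact ((Set.finite_Ico 1 (a (k+1)/a k)).image _)
  congr 1
  rw [Set.ncard_image_of_injective _ (fun r s h => by
    simpa [Nat.mul_left_cancel_iff hp] using Nat.eq_of_mul_eq_mul_right hp h)]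
  rw [ncard_Ico]

end blocks

lemma densCount_mono_right (A : Set ℕ) {m n : ℕ} (h : m ≤ n) :
    densCount A m ≤ densCount A n := by
  rw [densCount_eq_ncard, densCount_eq_ncard]
  exact Set.ncard_le_ncard (Set.inter_subset_inter_right _ (Set.Iio_subset_Iio h))
    ((Set.finite_Iio n).subset Set.inter_subset_right)

section final
variable {a d : ℕ → ℕ} (ha0 : a 0 = 1) (hmono : StrictMono a) (hdvd : ∀ n, a n ∣ a (n+1))
  (hdmono : StrictMono d)
  (hdrange : Set.range d = {m : ℕ | ∃ k r : ℕ, 1 ≤ r ∧ r < a (k + 1) / a k ∧ m = r * a k})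

include ha0 hmono hdvd

lemma norm_bad {k r : ℕ} (h16 : 16 ≤ a (k+1) / a k) (h16' : 16 ≤ a (k+2) / a (k+1))
    (hr1 : (a (k+1) / a k + 3) / 4 ≤ r) (hr2 : r < a (k+1) / a k / 2 + 1) :
    (1/4 : ℝ) ≤ ‖((r * a k : ℕ) : ℤ) • ((tailSum a 0 : ℝ) : AddCircle (1:ℝ))‖ := by
  obtain ⟨z, hz⟩ := congruence ha0 hmono hdvd k
  have heq : ((r * a k : ℕ) : ℤ) • ((tailSum a 0 : ℝ) : AddCircle (1:ℝ))
      = (((r : ℝ) * ((a k : ℝ) * tailSum a (k+1)) : ℝ) : AddCircle (1:ℝ)) := by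
    rw [zsmul_coe]
    have : ((r * a k : ℕ) : ℝ) * tailSum a 0
        = (r * z : ℕ) + (r : ℝ) * ((a k : ℝ) * tailSum a (k+1)) := by
      push_cast
      rw [mul_assoc, hz]
      ring
    rw [this, coe_add_nat]
  rw [heq]
  set B : ℝ := ((a (k+1) / a k : ℕ) : ℝ) with hB
  set B' : ℝ := ((a (k+2) / a (k+1) : ℕ) : ℝ) with hB'
  have hBpos : (0:ℝ) < B := cast_b_pos ha0 hmono hdvd k
  have hB'pos : (0:ℝ) < B' := cast_b_pos ha0 hmono hdvd (k+1)
  have hB16 : (16:ℝ) ≤ B := by rw [hB]; exact_mod_cast h16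
  have hB'16 : (16:ℝ) ≤ B' := by rw [hB']; exact_mod_cast h16'
  have hrB : B ≤ 4 * (r:ℝ) := by
    have h' : a (k+1) / a k ≤ 4 * r := by omega
    rw [hB]
    exact_mod_cast h'
  have hrB2 : 2 * (r:ℝ) ≤ B := by
    have h' : 2 * r ≤ a (k+1) / a k := by omega
    rw [hB]
    exact_mod_cast h'
  have hrpos : (0:ℝ) < (r:ℝ) := by
    have : 1 ≤ r := by omega
    exact_mod_cast this
  have ht_ge := t_ge ha0 hmono hdvd k
  have ht_le := t_le ha0 hmono hdvd k
  apply norm_coe_ge_of_mem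
  · calc (1/4 : ℝ) ≤ (r:ℝ) * (1 / B) := by
          rw [mul_one_div, le_div_iff₀ hBpos]
          linarith
      _ ≤ (r:ℝ) * ((a k : ℝ) * tailSum a (k+1)) :=
          mul_le_mul_of_nonneg_left ht_ge hrpos.le
  · calc (r:ℝ) * ((a k : ℝ) * tailSum a (k+1))
        ≤ (r:ℝ) * (1 / B + 2 / (B * B')) := mul_le_mul_of_nonneg_left ht_le hrpos.le
      _ = (r:ℝ) / B + 2 * (r:ℝ) / (B * B') := by ring
      _ ≤ 1/2 + 1/B' := by
          have e1 : (r:ℝ) / B ≤ 1/2 := by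
            rw [div_le_div_iff₀ hBpos (by norm_num)]
            linarith
          have e2 : 2 * (r:ℝ) / (B * B') ≤ 1 / B' := by
            rw [div_le_div_iff₀ (by positivity) hB'pos]
            nlinarith
          linarith
      _ ≤ 3/4 := by
          have : 1 / B' ≤ 1 / 16 := by
            rw [div_le_div_iff₀ hB'pos (by norm_num)]
            linarith
          linarith

include hdmono hdrange

lemma bad_step {k : ℕ} (h16 : 16 ≤ a (k+1) / a k) (h16' : 16 ≤ a (k+2) / a (k+1)) :
    densCount {n | (1/4 : ℝ) ≤ ‖(d n : ℤ) • ((tailSum a 0 : ℝ) : AddCircle (1:ℝ))‖}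
        (densCount (Set.range d) (a k)) + (a (k+1) / a k) / 8 ≤
    densCount {n | (1/4 : ℝ) ≤ ‖(d n : ℤ) • ((tailSum a 0 : ℝ) : AddCircle (1:ℝ))‖}
        (densCount (Set.range d) (a (k+1))) := by
  set S : Set ℕ := {n | (1/4 : ℝ) ≤ ‖(d n : ℤ) • ((tailSum a 0 : ℝ) : AddCircle (1:ℝ))‖} with hS
  set q₁ : ℕ := (a (k+1) / a k + 3) / 4 with hq₁
  set q₂ : ℕ := a (k+1) / a k / 2 + 1 with hq₂
  set Bad : Set ℕ := (fun r => r * a k) '' Set.Ico q₁ q₂ with hBad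
  set T : Set ℕ := d ⁻¹' Bad with hT
  have hp := apos ha0 hmono k
  have hBadSub : Bad ⊆ Set.range d := by
    rintro m ⟨r, ⟨hr1, hr2⟩, rfl⟩
    rw [hdrange]
    exact ⟨k, r, by omega, by omega, rfl⟩
  have hBadBd : ∀ m ∈ Bad, a k ≤ m ∧ m < a (k+1) := by
    rintro m ⟨r, ⟨hr1, hr2⟩, rfl⟩
    exact elem_bounds ha0 hmono hdvd (by omega) (by omega)
  have hTS : T ⊆ S := by
    intro n hn
    obtain ⟨r, ⟨hr1, hr2⟩, hdn⟩ := hn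
    show (1/4 : ℝ) ≤ ‖(d n : ℤ) • ((tailSum a 0 : ℝ) : AddCircle (1:ℝ))‖
    have hdn' : d n = r * a k := hdn.symm
    rw [show ((d n : ℕ) : ℤ) = ((r * a k : ℕ) : ℤ) from by rw [hdn']]
    exact norm_bad ha0 hmono hdvd h16 h16' hr1 hr2
  have hTlt : T ⊆ Set.Iio (densCount (Set.range d) (a (k+1))) := by
    intro n hn
    have h1 := (hBadBd _ hn).2
    rw [Set.mem_Iio, ← strictMono_lt_iff_lt_densCount d hdmono]
    exact h1
  have hTge : ∀ n ∈ T, densCount (Set.range d) (a k) ≤ n := by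
    intro n hn
    have h1 := (hBadBd _ hn).1
    by_contra hc
    push_neg at hc
    rw [← strictMono_lt_iff_lt_densCount d hdmono] at hc
    omega
  have hTcard : T.ncard = q₂ - q₁ := by
    have h1 : d '' T = Bad := Set.image_preimage_eq_of_subset hBadSub
    have h2 : T.ncard = Bad.ncard := by
      rw [← h1, Set.ncard_image_of_injective _ hdmono.injective]
    rw [h2, hBad, Set.ncard_image_of_injective _
      (fun r s h => Nat.eq_of_mul_eq_mul_right hp h), ncard_Ico]
  have hsub : (S ∩ Set.Iio (densCount (Set.range d) (a k))) ∪ T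
      ⊆ S ∩ Set.Iio (densCount (Set.range d) (a (k+1))) := by
    rintro n (⟨hn1, hn2⟩ | hn)
    · refine ⟨hn1, ?_⟩
      simp only [Set.mem_Iio] at *
      have : densCount (Set.range d) (a k) ≤ densCount (Set.range d) (a (k+1)) :=
        densCount_mono_right _ (hmono.monotone (by omega))
      omega
    · exact ⟨hTS hn, hTlt hn⟩
  have hdisj : Disjoint (S ∩ Set.Iio (densCount (Set.range d) (a k))) T := by
    rw [Set.disjoint_left]
    rintro n ⟨hn1, hn2⟩ hn
    have := hTge n hn
    simp only [Set.mem_Iio] at hn2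
    omega
  have hfin1 : (S ∩ Set.Iio (densCount (Set.range d) (a k))).Finite :=
    (Set.finite_Iio _).subset Set.inter_subset_right
  have hfin2 : T.Finite := (Set.finite_Iio _).subset hTlt
  have hq : q₂ - q₁ ≥ (a (k+1) / a k) / 8 := by omega
  calc densCount S (densCount (Set.range d) (a k)) + (a (k+1) / a k) / 8
      ≤ (S ∩ Set.Iio (densCount (Set.range d) (a k))).ncard + T.ncard := by
        rw [densCount_eq_ncard, hTcard]; omega
    _ = ((S ∩ Set.Iio (densCount (Set.range d) (a k))) ∪ T).ncard :=
        (Set.ncard_union_eq hdisj hfin1 hfin2).symm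
    _ ≤ (S ∩ Set.Iio (densCount (Set.range d) (a (k+1)))).ncard :=
        Set.ncard_le_ncard hsub ((Set.finite_Iio _).subset Set.inter_subset_right)
    _ = densCount S (densCount (Set.range d) (a (k+1))) := (densCount_eq_ncard _ _).symm

end final

section final2
variable {a d : ℕ → ℕ} (ha0 : a 0 = 1) (hmono : StrictMono a) (hdvd : ∀ n, a n ∣ a (n+1))
  (hdmono : StrictMono d)
  (hdrange : Set.range d = {m : ℕ | ∃ k r : ℕ, 1 ≤ r ∧ r < a (k + 1) / a k ∧ m = r * a k})
  (hbdiv : Tendsto (fun n => a (n + 1) / a n) atTop atTop)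

include ha0 hmono hdvd hdmono hdrange hbdiv

lemma not_stat :
    ¬ StatTendstoZero (fun n => (d n : ℤ) • ((tailSum a 0 : ℝ) : AddCircle (1:ℝ))) := by
  intro hstat
  have hS : HasDensity
      {n | (1/4 : ℝ) ≤ ‖(d n : ℤ) • ((tailSum a 0 : ℝ) : AddCircle (1:ℝ))‖} 0 :=
    hstat (1/4) (by norm_num)
  set S : Set ℕ := {n | (1/4 : ℝ) ≤ ‖(d n : ℤ) • ((tailSum a 0 : ℝ) : AddCircle (1:ℝ))‖}
    with hSdef
  obtain ⟨j0, hj0⟩ := eventually_atTop.mp (hbdiv.eventually_ge_atTop 16)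
  have hrec : ∀ k, densCount (Set.range d) (a (k+1)) =
      densCount (Set.range d) (a k) + (a (k+1) / a k - 1) := by
    intro k
    rw [hdrange]
    exact dset_count_rec ha0 hmono hdvd k
  have key : ∀ i : ℕ,
      densCount (Set.range d) (a (j0 + i + 1)) + 3 * (i + 1)
        ≤ 16 * densCount S (densCount (Set.range d) (a (j0 + i + 1)))
          + densCount (Set.range d) (a j0) ∧
      densCount (Set.range d) (a j0) + 15 * (i + 1)
        ≤ densCount (Set.range d) (a (j0 + i + 1)) := by
    intro i
    induction i with
    | zero =>
      have hb := bad_step ha0 hmono hdvd hdmono hdrange (k := j0)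
        (hj0 j0 le_rfl) (hj0 (j0+1) (by omega))
      rw [← hSdef] at hb
      have hr := hrec j0
      have h16 := hj0 j0 le_rfl
      have hdiv : 8 * (a (j0+1) / a j0 / 8) + 7 ≥ a (j0+1) / a j0 := by omega
      simp only [Nat.add_zero]
      omega
    | succ i ih =>
      have hb := bad_step ha0 hmono hdvd hdmono hdrange (k := j0 + i + 1)
        (hj0 _ (by omega)) (hj0 _ (by omega))
      rw [← hSdef] at hb
      have hr := hrec (j0 + i + 1)
      have h16 := hj0 (j0 + i + 1) (by omega)
      have hdiv : 8 * (a (j0+i+1+1) / a (j0+i+1) / 8) + 7 ≥ a (j0+i+1+1) / a (j0+i+1) := by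
        omega
      have hidx : j0 + (i + 1) + 1 = j0 + i + 1 + 1 := by omega
      rw [hidx]
      omega
  have hev := eventually_atTop.mp ((hS.eventually_lt_const (by norm_num : (0:ℝ) < 1/16)))
  obtain ⟨N, hN⟩ := hev
  set i : ℕ := N + densCount (Set.range d) (a j0) with hi
  set n : ℕ := densCount (Set.range d) (a (j0 + i + 1)) with hn
  obtain ⟨h1, h2⟩ := key i
  rw [← hn] at h1 h2
  have hnN : N ≤ n := by omega
  have h16n : n ≤ 16 * densCount S n := by omega
  have hlt := hN n hnN
  have hnpos : (0:ℝ) < (n:ℝ) := by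
    have : 0 < n := by omega
    exact_mod_cast this
  rw [div_lt_div_iff₀ hnpos (by norm_num)] at hlt
  have : (n : ℝ) ≤ 16 * (densCount S n : ℝ) := by exact_mod_cast h16n
  linarith

end final2

theorem stmt_12 (a d : ℕ → ℕ) (ha : IsArithSeq a) (hd : IsDSeq a d)
    (hbdiv : Tendsto (fun n => a (n + 1) / a n) atTop atTop) :
    ¬ charSet (fun n => (a n : ℤ)) ⊆ sChar (fun n => (d n : ℤ)) ∧
    ¬ sChar (fun n => (a n : ℤ)) ⊆ sChar (fun n => (d n : ℤ)) := by
  obtain ⟨ha0, hmono, hdvd⟩ := ha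
  obtain ⟨hdmono, hdrange⟩ := hd
  set X : AddCircle (1:ℝ) := ((tailSum a 0 : ℝ) : AddCircle (1:ℝ)) with hX
  have hchar : X ∈ charSet (fun n => (a n : ℤ)) :=
    tendsto_a_smul ha0 hmono hdvd hbdiv
  have hsChar : X ∈ sChar (fun n => (a n : ℤ)) := by
    intro ε hε
    have hev : ∀ᶠ n in atTop, ‖(a n : ℤ) • X‖ < ε := by
      have h0 : Tendsto (fun n => ‖(a n : ℤ) • X‖) atTop (𝓝 0) := by
        rw [← tendsto_zero_iff_norm_tendsto_zero]
        exact hchar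
      exact h0.eventually_lt_const hε
    obtain ⟨N, hN⟩ := eventually_atTop.mp hev
    apply hasDensity_zero_of_subset_Iio (N := N)
    intro n hn
    simp only [Set.mem_setOf_eq] at hn
    by_contra hc
    simp only [Set.mem_Iio, not_lt] at hc
    exact absurd hn (not_le.mpr (hN n hc))
  have hnot : X ∉ sChar (fun n => (d n : ℤ)) :=
    not_stat ha0 hmono hdvd hdmono hdrange hbdiv
  exact ⟨fun h => hnot (h hchar), fun h => hnot (h hsChar)⟩
end
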